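/- arXiv:1406.0466 — 4 statements merged into one kernel-verified Lean document; each statement's English description precedes it below -/
import Mathlib

section
/- For every positive integer n, the number of pairs (x, y) of integers with x² + y² = n equals 4 times the sum over odd divisors d of n of (-1)^((d-1)/2). -/
open Zsqrtd GaussianInt

set_option synthInstance.maxHeartbeats 1000000
set_option maxHeartbeats 2000000

namespace TwoSquaresAux

local notation "GI" => GaussianInt

lemma isUnit_iff_norm (z : GI) : IsUnit z ↔ z.norm = 1 := by
  rw [← Zsqrtd.norm_eq_one_iff]
  have := GaussianInt.norm_nonneg z
  omega

lemma normOne_set : {z : GI | z.norm = 1} =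
    {⟨1,0⟩, ⟨-1,0⟩, ⟨0,1⟩, ⟨0,-1⟩} := by
  ext z
  obtain ⟨a, b⟩ := z
  simp only [Set.mem_setOf_eq, Set.mem_insert_iff, Set.mem_singleton_iff, Zsqrtd.norm_def,
    Zsqrtd.ext_iff]
  constructor
  · intro h
    have h1 : a * a + b * b = 1 := by linarith
    have ha1 : -1 ≤ a := by nlinarith
    have ha2 : a ≤ 1 := by nlinarith
    have hb1 : -1 ≤ b := by nlinarith
    have hb2 : b ≤ 1 := by nlinarith
    interval_cases a <;> interval_cases b <;> simp_all <;> omega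
  · rintro (⟨rfl, rfl⟩ | ⟨rfl, rfl⟩ | ⟨rfl, rfl⟩ | ⟨rfl, rfl⟩) <;> norm_num

lemma card_units : Nat.card GIˣ = 4 := by
  have e : GIˣ ≃ {z : GI // z.norm = 1} :=
    { toFun := fun u => ⟨u.1, (isUnit_iff_norm _).1 u.isUnit⟩
      invFun := fun z => ((isUnit_iff_norm _).2 z.2).unit
      left_inv := fun u =>
        Units.ext (((isUnit_iff_norm (u : GI)).2 ((isUnit_iff_norm _).1 u.isUnit)).unit_spec)
      right_inv := fun z => Subtype.ext (((isUnit_iff_norm _).2 z.2).unit_spec) }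
  rw [Nat.card_congr e]
  have : {z : GI | z.norm = 1} = ↑({⟨1,0⟩, ⟨-1,0⟩, ⟨0,1⟩, ⟨0,-1⟩} : Finset GI) := by
    rw [normOne_set]; simp
  rw [show {z : GI // z.norm = 1} = ↥{z : GI | z.norm = 1} from rfl, this,
    Nat.card_coe_set_eq, Set.ncard_coe_finset]
  decide

/-- The set of solutions of norm n. -/
def Sol (n : ℕ) : Set GI := {z | z.norm = (n : ℤ)}

/-- Associate classes of Gaussian integers of norm n. -/
def AS (n : ℕ) : Set (Associates GI) :=
  {a | ∃ z : GI, Associates.mk z = a ∧ z.norm = (n : ℤ)}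

lemma norm_pow (z : GI) (k : ℕ) : (z ^ k).norm = z.norm ^ k := by
  induction k with
  | zero => simp [Zsqrtd.norm_one]
  | succ k ih => rw [pow_succ, pow_succ, Zsqrtd.norm_mul, ih]

lemma norm_of_associated {x y : GI} (h : Associated x y) : x.norm = y.norm := by
  obtain ⟨u, rfl⟩ := h
  rw [Zsqrtd.norm_mul, (isUnit_iff_norm _).1 u.isUnit, mul_one]

lemma dvd_coe_norm (z : GI) : z ∣ (z.norm : GI) := ⟨star z, Zsqrtd.norm_eq_mul_conj z⟩

lemma norm_dvd_of_dvd {x y : GI} (h : x ∣ y) : x.norm ∣ y.norm := by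
  obtain ⟨c, rfl⟩ := h
  exact ⟨c.norm, Zsqrtd.norm_mul x c⟩

lemma natAbs_norm_eq {z : GI} {n : ℕ} (h : z.norm = (n : ℤ)) : z.norm.natAbs = n := by
  omega

lemma norm_eq_of_natAbs {z : GI} {n : ℕ} (h : z.norm.natAbs = n) : z.norm = (n : ℤ) := by
  have := GaussianInt.norm_nonneg z
  omega

lemma dvd_natCast_of_norm {z : GI} {n : ℕ} (h : z.norm = (n : ℤ)) : z ∣ (n : GI) := by
  have := dvd_coe_norm z
  rw [h] at this
  simpa using this

/-- splitting lemma -/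
lemma split {m n : ℕ} (hm : m ≠ 0) (hn : n ≠ 0) (h : m.Coprime n) {z : GI}
    (hz : z.norm = ((m * n : ℕ) : ℤ)) :
    ∃ x y : GI, z = x * y ∧ x.norm = (m : ℤ) ∧ y.norm = (n : ℤ) := by
  have hdvd : z ∣ ((m : GI) * (n : GI)) := by
    have := dvd_natCast_of_norm hz
    rwa [Nat.cast_mul] at this
  obtain ⟨x, y, hxm, hyn, rfl⟩ := exists_dvd_and_dvd_of_dvd_mul hdvd
  set a := x.norm.natAbs with ha
  set b := y.norm.natAbs with hb
  have hab : a * b = m * n := by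
    have h1 : (x * y).norm.natAbs = m * n := natAbs_norm_eq hz
    rw [Zsqrtd.norm_mul, Int.natAbs_mul] at h1
    exact h1
  have ham : a ∣ m * m := by
    have := norm_dvd_of_dvd hxm
    rw [Zsqrtd.norm_natCast] at this
    have h2 := Int.natAbs_dvd_natAbs.mpr this
    rwa [Int.natAbs_mul, Int.natAbs_natCast] at h2
  have hbn : b ∣ n * n := by
    have := norm_dvd_of_dvd hyn
    rw [Zsqrtd.norm_natCast] at this
    have h2 := Int.natAbs_dvd_natAbs.mpr this
    rwa [Int.natAbs_mul, Int.natAbs_natCast] at h2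
  have hco_an : a.Coprime n := Nat.Coprime.coprime_dvd_left ham (h.mul h)
  have hco_bm : b.Coprime m := Nat.Coprime.coprime_dvd_left hbn ((h.symm.mul h.symm))
  have hadm : a ∣ m := by
    have : a ∣ m * n := ⟨b, hab.symm⟩
    exact (Nat.Coprime.dvd_of_dvd_mul_right hco_an) this
  have hbdn : b ∣ n := by
    have : b ∣ m * n := ⟨a, by rw [← hab]; ring⟩
    exact (Nat.Coprime.dvd_of_dvd_mul_left hco_bm) this
  -- now a = m and b = n
  have ha0 : a ≠ 0 := by
    intro h0; rw [h0, Nat.zero_mul] at hab; exact (Nat.mul_ne_zero hm hn) hab.symm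
  obtain ⟨c, hc⟩ := hadm
  have hbn' : b = c * n := by
    have : a * b = a * (c * n) := by rw [hab, hc]; ring
    exact Nat.eq_of_mul_eq_mul_left (Nat.pos_of_ne_zero ha0) this
  have hbeq : b = n := Nat.dvd_antisymm hbdn ⟨c, by rw [hbn']; ring⟩
  have haeq : a = m := by
    have hn0 : 0 < n := Nat.pos_of_ne_zero hn
    have : a * n = m * n := by rw [← hab, hbeq]
    exact Nat.eq_of_mul_eq_mul_right hn0 this
  exact ⟨x, y, rfl, norm_eq_of_natAbs haeq, norm_eq_of_natAbs hbeq⟩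

lemma isCoprime_cast {m n : ℕ} (h : m.Coprime n) : IsCoprime (m : GI) (n : GI) := by
  have h1 : IsCoprime (m : ℤ) (n : ℤ) := Nat.Coprime.isCoprime h
  have h2 := h1.map (Int.castRingHom GI)
  simpa using h2

lemma coprime_of_norms {m n : ℕ} (h : m.Coprime n) {x y : GI}
    (hx : x.norm = (m : ℤ)) (hy : y.norm = (n : ℤ)) : IsCoprime x y := by
  have h1 := isCoprime_cast h
  exact (h1.of_isCoprime_of_dvd_left (dvd_natCast_of_norm hx)).of_isCoprime_of_dvd_right
    (dvd_natCast_of_norm hy)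

lemma assoc_pair {m n : ℕ} (h : m.Coprime n) (hm : m ≠ 0) {x y x' y' : GI}
    (hx : x.norm = (m : ℤ)) (hy : y.norm = (n : ℤ)) (hx' : x'.norm = (m : ℤ))
    (hy' : y'.norm = (n : ℤ)) (hass : Associated (x * y) (x' * y')) :
    Associated x x' ∧ Associated y y' := by
  have c1 : IsCoprime x y' := coprime_of_norms h hx hy'
  have c2 : IsCoprime x' y := coprime_of_norms h hx' hy
  have d1 : x ∣ x' * y' := dvd_trans (Dvd.intro y rfl) hass.dvd
  have d2 : x' ∣ x * y := dvd_trans (Dvd.intro y' rfl) hass.symm.dvd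
  have hxx' : Associated x x' :=
    associated_of_dvd_dvd (c1.dvd_of_dvd_mul_right d1) (c2.dvd_of_dvd_mul_right d2)
  have hx0 : x ≠ 0 := by
    intro h0
    rw [h0, Zsqrtd.norm_zero] at hx
    exact hm (by exact_mod_cast hx.symm)
  exact ⟨hxx', hass.of_mul_left hxx' hx0⟩

/-- the arithmetic function counting associate classes -/
noncomputable def Lfun : ArithmeticFunction ℤ :=
  ⟨fun n => if n = 0 then 0 else (Nat.card (AS n) : ℤ), by simp⟩

lemma Lfun_apply {n : ℕ} (hn : n ≠ 0) : Lfun n = (Nat.card (AS n) : ℤ) := by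
  simp [Lfun, hn]

lemma AS_one : AS 1 = {1} := by
  ext a
  constructor
  · rintro ⟨z, rfl, hz⟩
    have : IsUnit z := (isUnit_iff_norm z).2 (by exact_mod_cast hz)
    simpa [Associates.mk_eq_one] using this
  · rintro rfl
    exact ⟨1, by simp [Associates.mk_eq_one], by simp [Zsqrtd.norm_one]⟩

def ASmulMap (m n : ℕ) (p : AS m × AS n) : AS (m * n) :=
  ⟨p.1.1 * p.2.1, by
    obtain ⟨x, hx1, hx2⟩ := p.1.2
    obtain ⟨y, hy1, hy2⟩ := p.2.2
    refine ⟨x * y, ?_, ?_⟩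
    · rw [← Associates.mk_mul_mk, hx1, hy1]
    · rw [Zsqrtd.norm_mul, hx2, hy2]; push_cast; ring⟩

lemma card_AS_mul {m n : ℕ} (hm : m ≠ 0) (hn : n ≠ 0) (h : m.Coprime n) :
    Nat.card (AS (m * n)) = Nat.card (AS m) * Nat.card (AS n) := by
  have hinj : Function.Injective (ASmulMap m n) := by
    rintro ⟨⟨A, a, ha1, ha2⟩, ⟨B, b, hb1, hb2⟩⟩ ⟨⟨A', a', ha1', ha2'⟩, ⟨B', b', hb1', hb2'⟩⟩ hfe
    simp only [ASmulMap, Subtype.mk.injEq, Prod.mk.injEq] at hfe ⊢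
    subst ha1 hb1 ha1' hb1'
    rw [Associates.mk_mul_mk, Associates.mk_mul_mk, Associates.mk_eq_mk_iff_associated] at hfe
    obtain ⟨h1, h2⟩ := assoc_pair h hm ha2 hb2 ha2' hb2' hfe
    exact ⟨Subtype.ext (Associates.mk_eq_mk_iff_associated.2 h1),
      Subtype.ext (Associates.mk_eq_mk_iff_associated.2 h2)⟩
  have hsurj : Function.Surjective (ASmulMap m n) := by
    rintro ⟨C, z, hz1, hz2⟩
    obtain ⟨x, y, rfl, hxn, hyn⟩ := split hm hn h hz2
    refine ⟨⟨⟨Associates.mk x, x, rfl, hxn⟩, ⟨Associates.mk y, y, rfl, hyn⟩⟩, ?_⟩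
    simp only [ASmulMap, Subtype.mk.injEq]
    exact Subtype.ext (by show Associates.mk x * Associates.mk y = C; rw [Associates.mk_mul_mk, hz1])
  rw [← Nat.card_prod]
  exact (Nat.card_congr (Equiv.ofBijective _ ⟨hinj, hsurj⟩)).symm

lemma Lfun_mult : Lfun.IsMultiplicative := by
  constructor
  · rw [Lfun_apply one_ne_zero, AS_one]
    simp [Nat.card_coe_set_eq]
  · intro m n h
    rcases eq_or_ne m 0 with rfl | hm
    · have : n = 1 := Nat.coprime_zero_left n |>.mp h
      subst this
      simp [Lfun]
    rcases eq_or_ne n 0 with rfl | hn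
    · have : m = 1 := Nat.coprime_zero_right m |>.mp h
      subst this
      simp [Lfun]
    rw [Lfun_apply (Nat.mul_ne_zero hm hn), Lfun_apply hm, Lfun_apply hn,
      card_AS_mul hm hn h]
    push_cast
    ring

/-- primes of prime norm -/
lemma prime_of_norm_prime {z : GI} (h : Nat.Prime z.norm.natAbs) : Prime z := by
  have hirr : Irreducible z := by
    constructor
    · intro hu
      rw [← Zsqrtd.norm_eq_one_iff] at hu
      rw [hu] at h
      exact Nat.not_prime_one h
    · intro a b hab
      have : a.norm.natAbs * b.norm.natAbs = z.norm.natAbs := by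
        rw [hab, Zsqrtd.norm_mul, Int.natAbs_mul]
      rw [← this] at h
      rcases (Nat.prime_mul_iff.mp h) with ⟨_, hb1⟩ | ⟨_, ha1⟩
      · right; exact Zsqrtd.norm_eq_one_iff.mp hb1
      · left; exact Zsqrtd.norm_eq_one_iff.mp ha1
  exact hirr.prime


lemma norm_star (z : GI) : (star z).norm = z.norm := by
  obtain ⟨x, y⟩ := z
  rw [Zsqrtd.star_mk]
  simp only [Zsqrtd.norm_def]
  ring

lemma not_prime_sq {p a : ℕ} (hp : p.Prime) (ha : a * a = p) : False := by
  have h2 := hp.two_le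
  rcases hp.eq_one_or_self_of_dvd a ⟨a, ha.symm⟩ with h | h
  · subst h; omega
  · subst h; nlinarith

lemma natAbs_cast_pow (p i : ℕ) : ((p : ℤ) ^ i).natAbs = p ^ i := by
  rw [Int.natAbs_pow, Int.natAbs_natCast]

/-- membership in AS of a prime power forces shape -/
lemma pow_eq_of_int_pow_eq {p : ℕ} (hp : 2 ≤ p) {i j : ℕ} (h : (p : ℤ) ^ i = (p : ℤ) ^ j) :
    i = j := by
  have := congrArg Int.natAbs h
  rw [natAbs_cast_pow, natAbs_cast_pow] at this
  exact Nat.pow_right_injective hp this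

/-! ### p = 2 -/

def π2 : GI := ⟨1, 1⟩

lemma norm_π2 : π2.norm = 2 := by simp [π2, Zsqrtd.norm_def]

lemma prime_π2 : Prime π2 := by
  apply prime_of_norm_prime
  rw [norm_π2]
  norm_num

lemma two_cast : ((2 : ℕ) : GI) = π2 * π2 * ⟨0, -1⟩ := by
  apply Zsqrtd.ext <;>
    simp [π2, Zsqrtd.re_mul, Zsqrtd.im_mul, Zsqrtd.re_natCast, Zsqrtd.im_natCast]

lemma unit_negI : IsUnit (⟨0, -1⟩ : GI) := by
  apply (isUnit_iff_norm _).2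
  simp [Zsqrtd.norm_def]

lemma card_AS_two_pow (k : ℕ) : Nat.card (AS (2 ^ k)) = 1 := by
  have hset : AS (2 ^ k) = {Associates.mk (π2 ^ k)} := by
    ext c
    constructor
    · rintro ⟨z, rfl, hz⟩
      have hzd : z ∣ ((2 ^ k : ℕ) : GI) := dvd_natCast_of_norm hz
      have hcast : ((2 ^ k : ℕ) : GI) = π2 ^ (2 * k) * (⟨0, -1⟩ : GI) ^ k := by
        rw [Nat.cast_pow, two_cast]
        ring
      rw [hcast, (unit_negI.pow k).dvd_mul_right] at hzd
      obtain ⟨i, _, hia⟩ := (dvd_prime_pow prime_π2 _).mp hzd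
      have hnorm : (2 : ℤ) ^ i = (2 : ℤ) ^ k := by
        have h1 := norm_of_associated hia
        rw [norm_pow, norm_π2, hz] at h1
        push_cast at h1
        linarith
      have : i = k := pow_eq_of_int_pow_eq (by norm_num) hnorm
      subst this
      exact Set.mem_singleton_iff.2 (Associates.mk_eq_mk_iff_associated.2 hia)
    · rintro rfl
      exact ⟨π2 ^ k, rfl, by rw [norm_pow, norm_π2]; push_cast; ring⟩
  rw [show Nat.card (AS (2 ^ k)) = (AS (2 ^ k)).ncard from Nat.card_coe_set_eq _, hset,
    Set.ncard_singleton]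

/-! ### p ≡ 3 mod 4 -/

lemma card_AS_p3 {p : ℕ} (hp : p.Prime) (h3 : p % 4 = 3) (k : ℕ) :
    Nat.card (AS (p ^ k)) = if Even k then 1 else 0 := by
  haveI : Fact p.Prime := ⟨hp⟩
  have hprime : Prime ((p : ℕ) : GI) :=
    (GaussianInt.prime_iff_mod_four_eq_three_of_nat_prime p).2 h3
  have hshape : ∀ c ∈ AS (p ^ k), ∃ i, 2 * i = k ∧ c = Associates.mk (((p : ℕ) : GI) ^ i) := by
    rintro c ⟨z, rfl, hz⟩
    have hzd : z ∣ ((p ^ k : ℕ) : GI) := dvd_natCast_of_norm hz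
    rw [Nat.cast_pow] at hzd
    obtain ⟨i, _, hia⟩ := (dvd_prime_pow hprime _).mp hzd
    have hnorm : ((p : ℤ) * p) ^ i = (p : ℤ) ^ k := by
      have h1 := norm_of_associated hia
      rw [norm_pow, Zsqrtd.norm_natCast, hz] at h1
      push_cast at h1
      linarith
    have h2i : 2 * i = k := by
      apply pow_eq_of_int_pow_eq hp.two_le
      rw [pow_mul]
      rw [← hnorm]
      ring
    exact ⟨i, h2i, Associates.mk_eq_mk_iff_associated.2 hia⟩
  by_cases hk : Even k
  · obtain ⟨j, hj⟩ := hk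
    have hset : AS (p ^ k) = {Associates.mk (((p : ℕ) : GI) ^ j)} := by
      ext c
      constructor
      · intro hc
        obtain ⟨i, h2i, rfl⟩ := hshape c hc
        have : i = j := by omega
        subst this
        rfl
      · rintro rfl
        refine ⟨((p : ℕ) : GI) ^ j, rfl, ?_⟩
        rw [norm_pow, Zsqrtd.norm_natCast]
        have : k = 2 * j := by omega
        subst this
        push_cast
        ring
    rw [show Nat.card (AS (p ^ k)) = (AS (p ^ k)).ncard from Nat.card_coe_set_eq _, hset,
      Set.ncard_singleton, if_pos ⟨j, hj⟩]
  · have hset : AS (p ^ k) = ∅ := by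
      ext c
      simp only [Set.mem_empty_iff_false, iff_false]
      intro hc
      obtain ⟨i, h2i, _⟩ := hshape c hc
      exact hk ⟨i, by omega⟩
    rw [show Nat.card (AS (p ^ k)) = (AS (p ^ k)).ncard from Nat.card_coe_set_eq _, hset,
      Set.ncard_empty, if_neg hk]


/-! ### p ≡ 1 mod 4 -/

lemma card_AS_p1 {p : ℕ} (hp : p.Prime) (h1 : p % 4 = 1) (k : ℕ) :
    Nat.card (AS (p ^ k)) = k + 1 := by
  haveI : Fact p.Prime := ⟨hp⟩
  -- find a Gaussian prime of norm p
  have hnotirr : ¬ Irreducible ((p : ℕ) : GI) := by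
    intro hirr
    have := (GaussianInt.prime_iff_mod_four_eq_three_of_nat_prime p).1 hirr.prime
    omega
  obtain ⟨a, b, hab⟩ := GaussianInt.sq_add_sq_of_nat_prime_of_not_irreducible p hnotirr
  set π : GI := ⟨(a : ℤ), (b : ℤ)⟩ with hπdef
  set τ : GI := star π with hτdef
  have hnπ : π.norm = (p : ℤ) := by
    rw [hπdef, Zsqrtd.norm_def]
    have := congrArg (Nat.cast : ℕ → ℤ) hab
    push_cast at this
    nlinarith [this]
  have hnτ : τ.norm = (p : ℤ) := by rw [hτdef, norm_star]; exact hnπ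
  have hπp : Prime π := prime_of_norm_prime (by rw [natAbs_norm_eq hnπ]; exact hp)
  have hτp : Prime τ := prime_of_norm_prime (by rw [natAbs_norm_eq hnτ]; exact hp)
  have hpodd : p % 2 = 1 := by omega
  -- π and τ are not associated
  have hne : ¬ Associated π τ := by
    rintro ⟨u, hu⟩
    have humem : (u : GI) ∈ {z : GI | Zsqrtd.norm z = 1} := (isUnit_iff_norm _).1 u.isUnit
    rw [normOne_set] at humem
    have hτval : τ = ⟨(a : ℤ), -(b : ℤ)⟩ := by rw [hτdef, hπdef, Zsqrtd.star_mk]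
    rcases humem with h | h | h | h <;>
      rw [h] at hu <;>
      rw [hτval, hπdef, Zsqrtd.ext_iff] at hu <;>
      simp only [Zsqrtd.re_mul, Zsqrtd.im_mul] at hu <;>
      obtain ⟨h1', h2'⟩ := hu
    · -- u = 1 : b = 0, p = a²
      have hb0 : b = 0 := by omega
      subst hb0
      exact not_prime_sq hp (by nlinarith [hab])
    · -- u = -1 : a = 0, p = b²
      have ha0 : a = 0 := by omega
      subst ha0
      exact not_prime_sq hp (by nlinarith [hab])
    · -- u = i : a = -b forces a = b = 0
      have : a = 0 ∧ b = 0 := by constructor <;> omega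
      obtain ⟨rfl, rfl⟩ := this
      simp at hab
      omega
    · -- u = -i : a = b, p even
      have hab' : a = b := by omega
      subst hab'
      have : 2 ∣ p := ⟨a ^ 2, by nlinarith [hab]⟩
      omega
  have hco : IsCoprime π τ :=
    (hπp.irreducible.coprime_iff_not_dvd).2
      (fun hd => hne (hπp.irreducible.associated_of_dvd hτp.irreducible hd))
  have hpeq : ((p : ℕ) : GI) = π * τ := by
    apply Zsqrtd.ext <;>
      simp only [hτdef, hπdef, Zsqrtd.star_mk, Zsqrtd.re_mul, Zsqrtd.im_mul,
        Zsqrtd.re_natCast, Zsqrtd.im_natCast]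
    · have := congrArg (Nat.cast : ℕ → ℤ) hab
      push_cast at this
      nlinarith [this]
    · ring
  -- norm of mixed powers
  have hnormpow : ∀ i j : ℕ, (π ^ i * τ ^ j).norm = (p : ℤ) ^ (i + j) := by
    intro i j
    rw [Zsqrtd.norm_mul, norm_pow, norm_pow, hnπ, hnτ, ← pow_add]
  -- key dvd lemma
  have key : ∀ i j : Fin (k + 1),
      Associates.mk (π ^ (i : ℕ) * τ ^ (k - (i : ℕ))) =
        Associates.mk (π ^ (j : ℕ) * τ ^ (k - (j : ℕ))) → (j : ℕ) ≤ (i : ℕ) := by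
    intro i j heq
    have hd : π ^ (j : ℕ) ∣ π ^ (i : ℕ) * τ ^ (k - (i : ℕ)) :=
      (dvd_mul_right _ _).trans (Associates.mk_eq_mk_iff_associated.1 heq).symm.dvd
    have hdd : π ^ (j : ℕ) ∣ π ^ (i : ℕ) := (hco.pow).dvd_of_dvd_mul_right hd
    have hn := norm_dvd_of_dvd hdd
    rw [norm_pow, norm_pow, hnπ] at hn
    have hn2 := Int.natAbs_dvd_natAbs.mpr hn
    rw [natAbs_cast_pow, natAbs_cast_pow] at hn2
    exact (Nat.pow_dvd_pow_iff_le_right hp.one_lt).1 hn2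
  have hmem : ∀ i : Fin (k + 1), Associates.mk (π ^ (i : ℕ) * τ ^ (k - (i : ℕ))) ∈ AS (p ^ k) := by
    intro i
    refine ⟨_, rfl, ?_⟩
    rw [hnormpow]
    have : (i : ℕ) + (k - (i : ℕ)) = k := by omega
    rw [this]
    push_cast
    ring
  have hbij : Function.Bijective
      (fun i : Fin (k + 1) =>
        (⟨Associates.mk (π ^ (i : ℕ) * τ ^ (k - (i : ℕ))), hmem i⟩ : AS (p ^ k))) := by
    constructor
    · intro i j hij
      have h2 := congrArg Subtype.val hij
      simp only at h2
      have hle1 := key i j h2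
      have hle2 := key j i h2.symm
      exact Fin.ext (le_antisymm hle2 hle1)
    · rintro ⟨C, z, rfl, hz⟩
      have hzd : z ∣ ((p ^ k : ℕ) : GI) := dvd_natCast_of_norm hz
      have hcast : ((p ^ k : ℕ) : GI) = π ^ k * τ ^ k := by
        rw [Nat.cast_pow, hpeq]; ring
      rw [hcast] at hzd
      obtain ⟨x, y, hx, hy, rfl⟩ := exists_dvd_and_dvd_of_dvd_mul hzd
      obtain ⟨i, hik, hxa⟩ := (dvd_prime_pow hπp _).mp hx
      obtain ⟨j, hjk, hya⟩ := (dvd_prime_pow hτp _).mp hy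
      have hassoc : Associated (x * y) (π ^ i * τ ^ j) := hxa.mul_mul hya
      have hnorm : (p : ℤ) ^ (i + j) = (p : ℤ) ^ k := by
        have h1 := norm_of_associated hassoc
        rw [hnormpow, hz] at h1
        push_cast at h1
        linarith
      have hij : i + j = k := pow_eq_of_int_pow_eq hp.two_le hnorm
      refine ⟨⟨i, by omega⟩, ?_⟩
      apply Subtype.ext
      simp only
      have : k - i = j := by omega
      rw [this]
      exact (Associates.mk_eq_mk_iff_associated.2 hassoc).symm
  have := Nat.card_congr (Equiv.ofBijective _ hbij)
  rw [← this, Nat.card_eq_fintype_card, Fintype.card_fin]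


/-! ### the character side -/

def chi : ArithmeticFunction ℤ :=
  ⟨fun d => ZMod.χ₄ (d : ZMod 4), by simpa using ZMod.χ₄_nat_eq_if_mod_four 0⟩

lemma chi_apply (d : ℕ) : chi d = ZMod.χ₄ (d : ZMod 4) := rfl

lemma chi_mult : chi.IsMultiplicative := by
  constructor
  · rw [chi_apply]
    simp
  · intro m n _
    rw [chi_apply, chi_apply, chi_apply, Nat.cast_mul, map_mul]

noncomputable def Gfun : ArithmeticFunction ℤ := chi * ↑ArithmeticFunction.zeta

lemma Gfun_mult : Gfun.IsMultiplicative :=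
  chi_mult.mul ArithmeticFunction.isMultiplicative_zeta.natCast

lemma Gfun_apply (n : ℕ) : Gfun n = ∑ i ∈ n.divisors, chi i :=
  ArithmeticFunction.coe_mul_zeta_apply

lemma chi_pow (p j : ℕ) : chi (p ^ j) = (chi p) ^ j := by
  rw [chi_apply, chi_apply, Nat.cast_pow, map_pow]

lemma L_eq_G : Lfun = Gfun := by
  rw [ArithmeticFunction.IsMultiplicative.eq_iff_eq_on_prime_powers Lfun Lfun_mult Gfun Gfun_mult]
  intro p i hp
  have hpk : (p : ℕ) ^ i ≠ 0 := pow_ne_zero i hp.ne_zero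
  rw [Lfun_apply hpk, Gfun_apply, Nat.sum_divisors_prime_pow hp]
  have hsum : ∑ j ∈ Finset.range (i + 1), chi (p ^ j) =
      ∑ j ∈ Finset.range (i + 1), (chi p) ^ j :=
    Finset.sum_congr rfl fun j _ => chi_pow p j
  rw [hsum]
  have h4 : p % 4 = 1 ∨ p % 4 = 2 ∨ p % 4 = 3 := by
    by_contra hcon
    have h0 : p % 4 = 0 := by omega
    have h2d : 2 ∣ p := by omega
    have := (Nat.prime_dvd_prime_iff_eq Nat.prime_two hp).1 h2d
    omega
  rcases h4 with h | h | h
  · -- p ≡ 1 : χ₄ p = 1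
    have hchi : chi p = 1 := by
      rw [chi_apply, ZMod.χ₄_nat_eq_if_mod_four]
      have : p % 2 = 1 := by omega
      rw [if_neg (by omega), if_pos h]
    rw [hchi]
    simp [card_AS_p1 hp h]
  · -- p = 2
    have hp2 : p = 2 := by
      have : 2 ∣ p := by omega
      exact ((Nat.prime_dvd_prime_iff_eq Nat.prime_two hp).1 this).symm
    subst hp2
    have hchi : chi 2 = 0 := by
      rw [chi_apply, ZMod.χ₄_nat_eq_if_mod_four]
      norm_num
    rw [hchi, card_AS_two_pow]
    have : ∀ j ∈ Finset.range (i + 1), (0 : ℤ) ^ j = if j = 0 then 1 else 0 :=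
      fun j _ => zero_pow_eq j
    rw [Finset.sum_congr rfl this, Finset.sum_ite_eq' (Finset.range (i + 1)) 0 (fun _ => (1 : ℤ))]
    simp
  · -- p ≡ 3 : χ₄ p = -1
    have hchi : chi p = -1 := by
      rw [chi_apply, ZMod.χ₄_nat_eq_if_mod_four]
      have : p % 2 = 1 := by omega
      rw [if_neg (by omega), if_neg (by omega)]
    rw [hchi, neg_one_geom_sum, card_AS_p3 hp h]
    by_cases hi : Even i
    · rw [if_pos hi, if_neg (by rw [Nat.even_add_one]; exact fun hc => hc hi)]
      norm_num
    · rw [if_neg hi, if_pos (Nat.even_add_one.2 hi)]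
      norm_num

/-! ### counting solutions via unit orbits -/

lemma card_Sol (n : ℕ) (hn : n ≠ 0) : Nat.card (Sol n) = Nat.card (AS n) * 4 := by
  have hmem : ∀ (w : AS n × GIˣ), w.1.2.choose * (w.2 : GI) ∈ Sol n := by
    rintro ⟨A, u⟩
    have h2 := A.2.choose_spec.2
    have hu : ((u : GI)).norm = 1 := (isUnit_iff_norm _).1 u.isUnit
    show (A.2.choose * (u : GI)).norm = (n : ℤ)
    rw [Zsqrtd.norm_mul, hu, mul_one, h2]
  have hbij : Function.Bijective
      (fun w : AS n × GIˣ => (⟨w.1.2.choose * (w.2 : GI), hmem w⟩ : Sol n)) := by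
    constructor
    · rintro ⟨A, u⟩ ⟨A', u'⟩ hww
      have hval : A.2.choose * (u : GI) = A'.2.choose * (u' : GI) :=
        congrArg Subtype.val hww
      have hA : A = A' := by
        apply Subtype.ext
        rw [← A.2.choose_spec.1, ← A'.2.choose_spec.1]
        rw [Associates.mk_eq_mk_iff_associated]
        have h1 : Associated A.2.choose (A.2.choose * (u : GI)) := ⟨u, rfl⟩
        have h2' : Associated A'.2.choose (A'.2.choose * (u' : GI)) := ⟨u', rfl⟩
        have h3 : Associated (A.2.choose * (u : GI)) A'.2.choose := by
          rw [hval]; exact h2'.symm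
        exact h1.trans h3
      subst hA
      have hc0 : A.2.choose ≠ 0 := by
        intro h0
        have := A.2.choose_spec.2
        rw [h0, Zsqrtd.norm_zero] at this
        exact hn (by exact_mod_cast this.symm)
      have : (u : GI) = (u' : GI) := mul_left_cancel₀ hc0 hval
      rw [Prod.mk.injEq]
      exact ⟨rfl, Units.ext this⟩
    · rintro ⟨z, hz⟩
      have hzmem : Associates.mk z ∈ AS n := ⟨z, rfl, hz⟩
      set A : AS n := ⟨Associates.mk z, hzmem⟩ with hA
      have hassoc : Associated A.2.choose z := by
        rw [← Associates.mk_eq_mk_iff_associated, A.2.choose_spec.1]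
      obtain ⟨u, hu⟩ := hassoc
      exact ⟨(A, u), Subtype.ext hu⟩
  rw [Nat.card_congr (Equiv.ofBijective _ hbij).symm, Nat.card_prod, card_units]

end TwoSquaresAux

theorem two_squares_count (n : ℕ) (hn : 0 < n) :
    (Nat.card {p : ℤ × ℤ | p.1 ^ 2 + p.2 ^ 2 = (n : ℤ)} : ℤ) =
      4 * ∑ d ∈ n.divisors.filter (fun d => d % 2 = 1), (-1 : ℤ) ^ ((d - 1) / 2) := by
  have hn' : n ≠ 0 := hn.ne'
  have e1 : {p : ℤ × ℤ | p.1 ^ 2 + p.2 ^ 2 = (n : ℤ)} ≃ TwoSquaresAux.Sol n :=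
    { toFun := fun p => ⟨⟨p.1.1, p.1.2⟩, by
        have := p.2
        simp only [Set.mem_setOf_eq] at this
        show Zsqrtd.norm _ = (n : ℤ)
        rw [Zsqrtd.norm_def]
        ring_nf
        ring_nf at this
        linarith⟩
      invFun := fun z => ⟨(z.1.re, z.1.im), by
        have := z.2
        show _ ^ 2 + _ ^ 2 = (n : ℤ)
        have h2 : Zsqrtd.norm z.1 = (n : ℤ) := this
        rw [Zsqrtd.norm_def] at h2
        ring_nf
        ring_nf at h2
        linarith⟩
      left_inv := fun p => rfl
      right_inv := fun z => rfl }
  rw [Nat.card_congr e1, TwoSquaresAux.card_Sol n hn']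
  have hLG := congrArg (fun f : ArithmeticFunction ℤ => f n) TwoSquaresAux.L_eq_G
  rw [TwoSquaresAux.Lfun_apply hn', TwoSquaresAux.Gfun_apply] at hLG
  have hsum : ∑ i ∈ n.divisors, TwoSquaresAux.chi i =
      ∑ d ∈ n.divisors.filter (fun d => d % 2 = 1), (-1 : ℤ) ^ ((d - 1) / 2) := by
    rw [Finset.sum_filter]
    refine Finset.sum_congr rfl fun d _ => ?_
    by_cases h2 : d % 2 = 1
    · rw [if_pos h2, TwoSquaresAux.chi_apply, ZMod.χ₄_eq_neg_one_pow h2]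
      congr 1
      omega
    · rw [if_neg h2, TwoSquaresAux.chi_apply, ZMod.χ₄_nat_eq_if_mod_four,
        if_pos (by omega)]
  rw [hsum] at hLG
  push_cast
  rw [← hLG]
  ring
end

section
/- For every nonnegative integer m and every nonnegative integer n, there exist integers x, y, z, w such that (x² + mx)/2 + (y² + my)/2 + (z² + mz)/2 + (w² + mw)/2 = n, where each summand (x² + mx)/2 is required to be a nonnegative integer (i.e., x ranges over integers with x² + mx ≥ 0 and x² + mx even, which holds automatically when m ≡ x (mod 2) considerations are handled; formally: every n ≥ 0 is a sum of four m-triangular numbers t_m(x) with x ∈ ℤ). -/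
/-- If a sum of four squares equals twice an odd number, then twice that sum
is a sum of four *odd* squares. -/
lemma four_odd_squares_aux (a b c d j : ℤ)
    (h : a ^ 2 + b ^ 2 + c ^ 2 + d ^ 2 = 2 * (2 * j + 1)) :
    ∃ p q r s : ℤ, Odd p ∧ Odd q ∧ Odd r ∧ Odd s ∧
      p ^ 2 + q ^ 2 + r ^ 2 + s ^ 2 = 4 * (2 * j + 1) := by
  rcases Int.even_or_odd a with ⟨a', rfl⟩ | ⟨a', rfl⟩ <;>
  rcases Int.even_or_odd b with ⟨b', rfl⟩ | ⟨b', rfl⟩ <;>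
  rcases Int.even_or_odd c with ⟨c', rfl⟩ | ⟨c', rfl⟩ <;>
  rcases Int.even_or_odd d with ⟨d', rfl⟩ | ⟨d', rfl⟩
  -- EEEE
  · exact absurd (show 4 * (a'^2 + b'^2 + c'^2 + d'^2) + 0 = 4*j + 2 by
      linear_combination h) (by omega)
  -- EEEO
  · exact absurd (show 4 * (a'^2 + b'^2 + c'^2 + d'^2 + d') + 1 = 4*j + 2 by
      linear_combination h) (by omega)
  -- EEOE
  · exact absurd (show 4 * (a'^2 + b'^2 + c'^2 + c' + d'^2) + 1 = 4*j + 2 by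
      linear_combination h) (by omega)
  -- EEOO : c,d odd; pairs (c,a),(d,b)
  · exact ⟨(2*c'+1) + (a'+a'), (2*c'+1) - (a'+a'), (2*d'+1) + (b'+b'), (2*d'+1) - (b'+b'),
      ⟨c'+a', by ring⟩, ⟨c'-a', by ring⟩, ⟨d'+b', by ring⟩, ⟨d'-b', by ring⟩,
      by linear_combination 2*h⟩
  -- EOEE
  · exact absurd (show 4 * (a'^2 + b'^2 + b' + c'^2 + d'^2) + 1 = 4*j + 2 by
      linear_combination h) (by omega)
  -- EOEO : b,d odd; pairs (b,a),(d,c)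
  · exact ⟨(2*b'+1) + (a'+a'), (2*b'+1) - (a'+a'), (2*d'+1) + (c'+c'), (2*d'+1) - (c'+c'),
      ⟨b'+a', by ring⟩, ⟨b'-a', by ring⟩, ⟨d'+c', by ring⟩, ⟨d'-c', by ring⟩,
      by linear_combination 2*h⟩
  -- EOOE : b,c odd; pairs (b,a),(c,d)
  · exact ⟨(2*b'+1) + (a'+a'), (2*b'+1) - (a'+a'), (2*c'+1) + (d'+d'), (2*c'+1) - (d'+d'),
      ⟨b'+a', by ring⟩, ⟨b'-a', by ring⟩, ⟨c'+d', by ring⟩, ⟨c'-d', by ring⟩,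
      by linear_combination 2*h⟩
  -- EOOO
  · exact absurd (show 4 * (a'^2 + b'^2 + b' + c'^2 + c' + d'^2 + d') + 3 = 4*j + 2 by
      linear_combination h) (by omega)
  -- OEEE
  · exact absurd (show 4 * (a'^2 + a' + b'^2 + c'^2 + d'^2) + 1 = 4*j + 2 by
      linear_combination h) (by omega)
  -- OEEO : a,d odd; pairs (a,b),(d,c)
  · exact ⟨(2*a'+1) + (b'+b'), (2*a'+1) - (b'+b'), (2*d'+1) + (c'+c'), (2*d'+1) - (c'+c'),
      ⟨a'+b', by ring⟩, ⟨a'-b', by ring⟩, ⟨d'+c', by ring⟩, ⟨d'-c', by ring⟩,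
      by linear_combination 2*h⟩
  -- OEOE : a,c odd; pairs (a,b),(c,d)
  · exact ⟨(2*a'+1) + (b'+b'), (2*a'+1) - (b'+b'), (2*c'+1) + (d'+d'), (2*c'+1) - (d'+d'),
      ⟨a'+b', by ring⟩, ⟨a'-b', by ring⟩, ⟨c'+d', by ring⟩, ⟨c'-d', by ring⟩,
      by linear_combination 2*h⟩
  -- OEOO
  · exact absurd (show 4 * (a'^2 + a' + b'^2 + c'^2 + c' + d'^2 + d') + 3 = 4*j + 2 by
      linear_combination h) (by omega)
  -- OOEE : a,b odd; pairs (a,c),(b,d)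
  · exact ⟨(2*a'+1) + (c'+c'), (2*a'+1) - (c'+c'), (2*b'+1) + (d'+d'), (2*b'+1) - (d'+d'),
      ⟨a'+c', by ring⟩, ⟨a'-c', by ring⟩, ⟨b'+d', by ring⟩, ⟨b'-d', by ring⟩,
      by linear_combination 2*h⟩
  -- OOEO
  · exact absurd (show 4 * (a'^2 + a' + b'^2 + b' + c'^2 + d'^2 + d') + 3 = 4*j + 2 by
      linear_combination h) (by omega)
  -- OOOE
  · exact absurd (show 4 * (a'^2 + a' + b'^2 + b' + c'^2 + c' + d'^2) + 3 = 4*j + 2 by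
      linear_combination h) (by omega)
  -- OOOO
  · exact absurd (show 4 * (a'^2 + a' + b'^2 + b' + c'^2 + c' + d'^2 + d') + 4 = 4*j + 2 by
      linear_combination h) (by omega)

/-- Every nonnegative integer is the sum of four `m`-triangular numbers
`t_m(x) = (x² + m·x)/2` with integer arguments (Theorem 11). -/
theorem four_m_triangular (m n : ℕ) :
    ∃ x y z w : ℤ,
      (x ^ 2 + (m : ℤ) * x) + (y ^ 2 + (m : ℤ) * y) + (z ^ 2 + (m : ℤ) * z) +
        (w ^ 2 + (m : ℤ) * w) = 2 * (n : ℤ) := by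
  obtain ⟨t, rfl | rfl⟩ := Nat.even_or_odd' m
  · -- m = 2*t
    obtain ⟨a, b, c, d, h⟩ := Nat.sum_four_squares (2*n + 4*t^2)
    have h' : (a:ℤ)^2 + (b:ℤ)^2 + (c:ℤ)^2 + (d:ℤ)^2 = 2*(n:ℤ) + 4*(t:ℤ)^2 := by
      exact_mod_cast h
    refine ⟨(a:ℤ) - t, (b:ℤ) - t, (c:ℤ) - t, (d:ℤ) - t, ?_⟩
    push_cast
    linear_combination h'
  · -- m = 2*t + 1
    obtain ⟨a, b, c, d, h⟩ := Nat.sum_four_squares (4*n + 2*(2*t+1)^2)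
    have h' : (a:ℤ)^2 + (b:ℤ)^2 + (c:ℤ)^2 + (d:ℤ)^2
        = 2 * (2 * ((n:ℤ) + 2*(t:ℤ)^2 + 2*(t:ℤ)) + 1) := by
      have : (a:ℤ)^2 + (b:ℤ)^2 + (c:ℤ)^2 + (d:ℤ)^2
          = 4*(n:ℤ) + 2*(2*(t:ℤ)+1)^2 := by exact_mod_cast h
      linear_combination this
    obtain ⟨p, q, r, s, hp, hq, hr, hs, hsum⟩ :=
      four_odd_squares_aux _ _ _ _ _ h'
    obtain ⟨u, rfl⟩ := hp
    obtain ⟨v, rfl⟩ := hq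
    obtain ⟨w, rfl⟩ := hr
    obtain ⟨z, rfl⟩ := hs
    refine ⟨u - t, v - t, w - t, z - t, ?_⟩
    push_cast
    have h4 : 4 * ((((u:ℤ) - t)^2 + (2*(t:ℤ)+1) * ((u:ℤ) - t))
        + (((v:ℤ) - t)^2 + (2*(t:ℤ)+1) * ((v:ℤ) - t))
        + (((w:ℤ) - t)^2 + (2*(t:ℤ)+1) * ((w:ℤ) - t))
        + (((z:ℤ) - t)^2 + (2*(t:ℤ)+1) * ((z:ℤ) - t))) = 4 * (2 * (n:ℤ)) := by
      linear_combination hsum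
    linarith
end

section
/- If n = (2l+1)m where l ≥ 0 and m ≥ 1 range over all factorizations of n into a positive integer times an odd positive integer, then Σ_{m=1}^{∞} q^m/(1+q^{2m}) = Σ_{n=1}^{∞} (Σ_{d odd, d∣n} (-1)^((d-1)/2)) q^n for |q| < 1. -/
theorem lambert_series_two_squares (q : ℝ) (hq : |q| < 1) :
    ∑' m : ℕ, q ^ (m + 1) / (1 + q ^ (2 * (m + 1))) =
      ∑' n : ℕ,
        (∑ d ∈ (n + 1).divisors.filter (fun d => d % 2 = 1),
            (-1 : ℝ) ^ ((d - 1) / 2)) * q ^ (n + 1) := by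
  set f : ℕ × ℕ → ℝ := fun p => (-1) ^ p.2 * q ^ ((2 * p.2 + 1) * (p.1 + 1)) with hf
  have habs : 0 ≤ |q| := abs_nonneg q
  -- summability of f
  have hgeo : Summable (fun n : ℕ => |q| ^ n) := summable_geometric_of_lt_one habs hq
  have hsum : Summable f := by
    rw [← summable_abs_iff]
    refine Summable.of_nonneg_of_le (f := fun p : ℕ × ℕ => |q| ^ p.1 * |q| ^ p.2)
      (fun p => abs_nonneg _) ?_ ?_
    · intro p
      rw [hf]
      rw [abs_mul, abs_pow, abs_pow, abs_neg, abs_one, one_pow, one_mul]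
      show _ ≤ |q| ^ p.1 * |q| ^ p.2
      rw [← pow_add]
      apply pow_le_pow_of_le_one habs (le_of_lt hq)
      nlinarith [p.1.zero_le, p.2.zero_le]
    · exact hgeo.mul_of_nonneg hgeo (fun n => pow_nonneg habs n) (fun n => pow_nonneg habs n)
  -- inner geometric sums
  have hinner : ∀ m : ℕ, Summable (fun l => f (m, l)) := by
    intro m
    exact (hsum.prod_factor m)
  have hLHS : ∀ m : ℕ, ∑' l : ℕ, f (m, l) = q ^ (m + 1) / (1 + q ^ (2 * (m + 1))) := by
    intro m
    have hterm : ∀ l : ℕ, f (m, l) = (-(q ^ (2 * (m + 1)))) ^ l * q ^ (m + 1) := by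
      intro l
      rw [hf]
      show (-1 : ℝ) ^ l * q ^ ((2 * l + 1) * (m + 1)) = _
      rw [show (2 * l + 1) * (m + 1) = 2 * (m + 1) * l + (m + 1) by ring, pow_add, pow_mul,
        neg_pow]
      ring
    have hnorm : ‖-(q ^ (2 * (m + 1)))‖ < 1 := by
      rw [norm_neg, Real.norm_eq_abs, abs_pow]
      exact pow_lt_one₀ habs hq (by omega)
    calc ∑' l : ℕ, f (m, l) = (∑' l : ℕ, (-(q ^ (2 * (m + 1)))) ^ l) * q ^ (m + 1) := by
          rw [← tsum_mul_right]; exact tsum_congr hterm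
      _ = (1 - -(q ^ (2 * (m + 1))))⁻¹ * q ^ (m + 1) := by
          rw [tsum_geometric_of_norm_lt_one hnorm]
      _ = q ^ (m + 1) / (1 + q ^ (2 * (m + 1))) := by
          rw [sub_neg_eq_add, div_eq_inv_mul]
  -- the sigma type of odd divisors
  let S := Σ n : ℕ, {d : ℕ // d ∈ (n + 1).divisors.filter (fun d => d % 2 = 1)}
  have hmem : ∀ p : ℕ × ℕ, (2 * p.2 + 1) ∈
      ((2 * p.2 + 1) * (p.1 + 1) - 1 + 1).divisors.filter (fun d => d % 2 = 1) := by
    intro p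
    have h1 : (2 * p.2 + 1) * (p.1 + 1) - 1 + 1 = (2 * p.2 + 1) * (p.1 + 1) := by
      have : 1 ≤ (2 * p.2 + 1) * (p.1 + 1) := Nat.one_le_iff_ne_zero.2 (by positivity)
      omega
    rw [h1, Finset.mem_filter, Nat.mem_divisors]
    exact ⟨⟨⟨p.1 + 1, rfl⟩, by positivity⟩, by omega⟩
  let e : S ≃ ℕ × ℕ :=
    { toFun := fun s => ((s.1 + 1) / s.2.1 - 1, (s.2.1 - 1) / 2)
      invFun := fun p => ⟨(2 * p.2 + 1) * (p.1 + 1) - 1, ⟨2 * p.2 + 1, hmem p⟩⟩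
      left_inv := by
        rintro ⟨n, d, hd⟩
        rw [Finset.mem_filter, Nat.mem_divisors] at hd
        obtain ⟨⟨hdvd, hne⟩, hodd⟩ := hd
        have hd1 : 1 ≤ d := Nat.pos_of_dvd_of_pos hdvd (by omega)
        have h2 : 2 * ((d - 1) / 2) + 1 = d := by omega
        have hq1 : 1 ≤ (n + 1) / d := Nat.one_le_div_iff (by omega) |>.2 (Nat.le_of_dvd (by omega) hdvd)
        have h3 : d * ((n + 1) / d) = n + 1 := Nat.mul_div_cancel' hdvd
        have hn : (2 * ((d - 1) / 2) + 1) * ((n + 1) / d - 1 + 1) - 1 = n := by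
          rw [h2]
          have : (n + 1) / d - 1 + 1 = (n + 1) / d := by omega
          rw [this, h3]
          omega
        exact Sigma.subtype_ext hn h2
      right_inv := by
        rintro ⟨m, l⟩
        have h1 : (2 * l + 1) * (m + 1) - 1 + 1 = (2 * l + 1) * (m + 1) := by
          have : 1 ≤ (2 * l + 1) * (m + 1) := Nat.one_le_iff_ne_zero.2 (by positivity)
          omega
        have h2 : (2 * l + 1) * (m + 1) / (2 * l + 1) = m + 1 :=
          Nat.mul_div_cancel_left _ (by omega)
        simp only [Prod.mk.injEq]
        constructor
        · rw [h1, h2]; omega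
        · omega }
  have hS : Summable (fun s : S => f (e s)) := (e.summable_iff (f := f)).2 hsum
  have hval : ∀ s : S, f (e s) = (-1 : ℝ) ^ ((s.2.1 - 1) / 2) * q ^ (s.1 + 1) := by
    rintro ⟨n, d, hd⟩
    rw [Finset.mem_filter, Nat.mem_divisors] at hd
    obtain ⟨⟨hdvd, hne⟩, hodd⟩ := hd
    have hd1 : 1 ≤ d := Nat.pos_of_dvd_of_pos hdvd (by omega)
    have h2 : 2 * ((d - 1) / 2) + 1 = d := by omega
    have hq1 : 1 ≤ (n + 1) / d := Nat.one_le_div_iff (by omega) |>.2 (Nat.le_of_dvd (by omega) hdvd)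
    have h3 : d * ((n + 1) / d) = n + 1 := Nat.mul_div_cancel' hdvd
    show (-1 : ℝ) ^ ((d - 1) / 2) * q ^ ((2 * ((d - 1) / 2) + 1) * ((n + 1) / d - 1 + 1)) = _
    rw [h2, show (n + 1) / d - 1 + 1 = (n + 1) / d from by omega, h3]
  calc ∑' m : ℕ, q ^ (m + 1) / (1 + q ^ (2 * (m + 1)))
      = ∑' (m : ℕ) (l : ℕ), f (m, l) := by
        exact tsum_congr fun m => (hLHS m).symm
    _ = ∑' p : ℕ × ℕ, f p := (Summable.tsum_prod' hsum hinner).symm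
    _ = ∑' s : S, f (e s) := (e.tsum_eq f).symm
    _ = ∑' s : S, (-1 : ℝ) ^ ((s.2.1 - 1) / 2) * q ^ (s.1 + 1) := tsum_congr hval
    _ = ∑' n : ℕ, ∑' d : {d : ℕ // d ∈ (n + 1).divisors.filter (fun d => d % 2 = 1)},
          (-1 : ℝ) ^ ((d.1 - 1) / 2) * q ^ (n + 1) := by
        apply Summable.tsum_sigma
        have : (fun s : S => (-1 : ℝ) ^ ((s.2.1 - 1) / 2) * q ^ (s.1 + 1)) =
            fun s : S => f (e s) := funext fun s => (hval s).symm
        rw [this]; exact hS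
    _ = ∑' n : ℕ, (∑ d ∈ (n + 1).divisors.filter (fun d => d % 2 = 1),
          (-1 : ℝ) ^ ((d - 1) / 2)) * q ^ (n + 1) := by
        refine tsum_congr fun n => ?_
        rw [Finset.tsum_subtype ((n + 1).divisors.filter (fun d => d % 2 = 1))
          (fun d => (-1 : ℝ) ^ ((d - 1) / 2) * q ^ (n + 1)), Finset.sum_mul]
end

section
/- For |q| < 1, the identity ψ(q) = (q²; q²)_∞ / (q; q²)_∞ holds, i.e., Σ_{n=0}^{∞} q^{n(n+1)/2} = Π_{n=1}^{∞} (1 − q^{2n}) / Π_{n=0}^{∞} (1 − q^{2n+1}). -/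
open Finset Filter Topology

/-- Products over all finsets expansion: summability of subset products. -/
lemma summable_finset_prod (g : ℕ → ℂ) (hg : Summable fun n => ‖g n‖) :
    Summable (fun t : Finset ℕ => ∏ n ∈ t, g n) := by
  apply Summable.of_norm
  have hnn : ∀ t : Finset ℕ, 0 ≤ ‖∏ n ∈ t, g n‖ := fun t => norm_nonneg _
  apply summable_of_sum_le (c := Real.exp (∑' n, ‖g n‖)) hnn
  intro S
  set u : Finset ℕ := S.sup id with hu
  have hSu : S ⊆ u.powerset := by
    intro t ht
    exact Finset.mem_powerset.2 (Finset.le_sup (f := id) ht)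
  calc ∑ t ∈ S, ‖∏ n ∈ t, g n‖ ≤ ∑ t ∈ u.powerset, ‖∏ n ∈ t, g n‖ := by
        exact Finset.sum_le_sum_of_subset_of_nonneg hSu (fun t _ _ => hnn t)
    _ ≤ ∑ t ∈ u.powerset, ∏ n ∈ t, ‖g n‖ := by
        exact Finset.sum_le_sum fun t _ => norm_prod_le _ _
    _ = ∏ n ∈ u, (‖g n‖ + 1) := by
        rw [Finset.prod_add]
        exact Finset.sum_congr rfl fun t _ => by simp
    _ ≤ ∏ n ∈ u, Real.exp ‖g n‖ := by
        apply Finset.prod_le_prod (fun n _ => by positivity)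
        intro n _
        linarith [Real.add_one_le_exp ‖g n‖]
    _ = Real.exp (∑ n ∈ u, ‖g n‖) := by rw [Real.exp_sum]
    _ ≤ Real.exp (∑' n, ‖g n‖) := by
        apply Real.exp_le_exp.2
        exact Summable.sum_le_tsum u (fun n _ => norm_nonneg _) hg

lemma hasProd_one_add (g : ℕ → ℂ) (hg : Summable fun n => ‖g n‖) :
    HasProd (fun n => 1 + g n) (∑' t : Finset ℕ, ∏ n ∈ t, g n) := by
  have hsum := (summable_finset_prod g hg).hasSum
  have hpow : Tendsto (fun s : Finset ℕ => s.powerset) atTop atTop := by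
    apply tendsto_atTop_atTop.2
    intro T
    refine ⟨T.sup id, fun s hs => ?_⟩
    intro t ht
    exact Finset.mem_powerset.2 (le_trans (Finset.le_sup (f := id) ht) hs)
  have := hsum.comp hpow
  unfold HasProd
  convert this using 1
  funext s
  simp only [Function.comp_apply]
  have : ∏ n ∈ s, (1 + g n) = ∏ n ∈ s, (g n + 1) := by
    exact Finset.prod_congr rfl fun n _ => add_comm _ _
  rw [this, Finset.prod_add]
  apply Finset.sum_congr rfl
  intro t ht
  simp
  rfl

lemma multipliable_one_add (g : ℕ → ℂ) (hg : Summable fun n => ‖g n‖) :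
    Multipliable (fun n => 1 + g n) := (hasProd_one_add g hg).multipliable


lemma tprod_one_add_ne_zero (g : ℕ → ℂ) (hg : Summable fun n => ‖g n‖)
    (h1 : ∀ n, 1 + g n ≠ 0) : (∏' n, (1 + g n)) ≠ 0 := by
  set g' : ℕ → ℂ := fun n => (1 + g n)⁻¹ - 1 with hg'
  have key : ∀ n, 1 + g' n = (1 + g n)⁻¹ := fun n => by simp [hg']
  have hsum' : Summable fun n => ‖g' n‖ := by
    have h0 : Tendsto (fun n => ‖g n‖) atTop (𝓝 0) := hg.tendsto_atTop_zero
    have hev : ∀ᶠ n in atTop, ‖g' n‖ ≤ 2 * ‖g n‖ := by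
      filter_upwards [h0.eventually_le_const (by norm_num : (0:ℝ) < 1/2)] with n hn
      have hb : (1:ℝ)/2 ≤ ‖1 + g n‖ := by
        have h := norm_add_le (1 + g n) (-g n)
        simp only [add_neg_cancel_right, norm_one, norm_neg] at h
        linarith
      have : g' n = -(g n) * (1 + g n)⁻¹ := by
        field_simp [hg', h1 n]
        simp only [hg']
        rw [sub_mul, inv_mul_cancel₀ (h1 n)]
        ring
      rw [this, norm_mul, norm_neg, norm_inv]
      rw [mul_comm]
      apply mul_le_mul_of_nonneg_right _ (norm_nonneg _)
      rw [inv_le_comm₀ (by linarith) (by norm_num)]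
      linarith
    exact Summable.of_norm_bounded_eventually_nat (hg.mul_left 2) (by simpa using hev)
  have hP := (multipliable_one_add g hg).hasProd
  have hP' := (multipliable_one_add g' hsum').hasProd
  have hmul := hP.mul hP'
  have hone : HasProd (fun n => (1 + g n) * (1 + g' n)) 1 := by
    have : (fun n => (1 + g n) * (1 + g' n)) = fun _ => (1:ℂ) := by
      funext n; rw [key n, mul_inv_cancel₀ (h1 n)]
    rw [this]; exact hasProd_one
  have := hmul.unique hone
  intro h
  rw [h, zero_mul] at this
  exact one_ne_zero this.symm


/-- triangular numbers -/
def tn : ℕ → ℕ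
  | 0 => 0
  | n + 1 => tn n + (n + 1)

lemma tn_eq (n : ℕ) : tn n = n * (n + 1) / 2 := by
  induction n with
  | zero => rfl
  | succ n ih =>
    have h : (n+1) * (n+2) = n * (n+1) + (n+1) * 2 := by ring
    rw [tn, ih, h, Nat.add_mul_div_right _ _ (by norm_num)]

lemma tn_two (n : ℕ) : 2 * tn n = n * (n + 1) := by
  induction n with
  | zero => rfl
  | succ n ih => rw [tn]; ring_nf; ring_nf at ih; omega

lemma tn_two_int (n : ℕ) : 2 * (tn n : ℤ) = n * (n + 1) := by
  have h := tn_two n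
  have h2 : ((2 * tn n : ℕ) : ℤ) = ((n * (n + 1) : ℕ) : ℤ) := congrArg (Nat.cast : ℕ → ℤ) h
  push_cast at h2
  linarith

noncomputable def Pq (q : ℂ) (m : ℕ) : ℂ := ∏ j ∈ Finset.range m, (1 - q ^ (j + 1))

noncomputable def Bq (q : ℂ) (M k : ℕ) : ℂ := Pq q M / (Pq q k * Pq q (M - k))

lemma Pq_succ (q : ℂ) (m : ℕ) : Pq q (m + 1) = Pq q m * (1 - q ^ (m + 1)) :=
  Finset.prod_range_succ _ _

lemma one_sub_pow_ne_zero {q : ℂ} (hq : ‖q‖ < 1) (j : ℕ) (hj : j ≠ 0) : 1 - q ^ j ≠ 0 := by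
  intro h
  have h1 : q ^ j = 1 := by linear_combination -h
  have : ‖q ^ j‖ < 1 := by
    rw [norm_pow]
    exact pow_lt_one₀ (norm_nonneg q) hq hj
  rw [h1, norm_one] at this
  exact lt_irrefl _ this

lemma Pq_ne_zero {q : ℂ} (hq : ‖q‖ < 1) (m : ℕ) : Pq q m ≠ 0 := by
  apply Finset.prod_ne_zero_iff.2
  intro j _
  exact one_sub_pow_ne_zero hq (j + 1) (Nat.succ_ne_zero j)

lemma Bq_self_left {q : ℂ} (hq : ‖q‖ < 1) (M : ℕ) : Bq q M 0 = 1 := by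
  unfold Bq
  rw [Nat.sub_zero]
  show Pq q M / (1 * Pq q M) = 1
  rw [one_mul, div_self (Pq_ne_zero hq M)]

lemma Bq_self_right {q : ℂ} (hq : ‖q‖ < 1) (M : ℕ) : Bq q M M = 1 := by
  unfold Bq
  rw [Nat.sub_self]
  show Pq q M / (Pq q M * Pq q 0) = 1
  have : Pq q 0 = 1 := rfl
  rw [this, mul_one, div_self (Pq_ne_zero hq M)]

lemma Bq_symm {q : ℂ} (M k : ℕ) (hk : k ≤ M) : Bq q M k = Bq q M (M - k) := by
  unfold Bq
  rw [Nat.sub_sub_self hk, mul_comm]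

lemma Bq_pascal {q : ℂ} (hq : ‖q‖ < 1) (M k : ℕ) (hk1 : 1 ≤ k) (hk2 : k ≤ M) :
    Bq q (M + 1) k = Bq q M k + q ^ (M + 1 - k) * Bq q M (k - 1) := by
  obtain ⟨k', rfl⟩ : ∃ k', k = k' + 1 := ⟨k - 1, by omega⟩
  obtain ⟨d, hd⟩ : ∃ d, M = k' + 1 + d := ⟨M - (k'+1), by omega⟩
  subst hd
  have e1 : k' + 1 + d + 1 - (k' + 1) = d + 1 := by omega
  have e2 : k' + 1 + d - (k' + 1) = d := by omega
  have e3 : k' + 1 + d - k' = d + 1 := by omega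
  have e4 : k' + 1 + d + 1 = (k' + 1 + d) + 1 := rfl
  unfold Bq
  rw [e1, e2, Nat.add_sub_cancel, e3, e4, Pq_succ q (k'+1+d), Pq_succ q d, Pq_succ q k']
  have hPk := Pq_ne_zero hq k'
  have hPd := Pq_ne_zero hq d
  have hPM := Pq_ne_zero hq (k'+1+d)
  have h1 := one_sub_pow_ne_zero hq (k'+1) (by omega)
  have h2 := one_sub_pow_ne_zero hq (d+1) (by omega)
  have hpow : q ^ (d + 1) * q ^ (k' + 1) = q ^ (k' + 1 + d + 1) := by
    rw [← pow_add]; congr 1; omega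
  have key : (1 - q ^ (k' + 1 + d + 1)) = (1 - q ^ (d + 1)) + q ^ (d + 1) * (1 - q ^ (k' + 1)) := by
    rw [mul_one_sub, ← hpow]; ring
  field_simp
  linear_combination (Pq q (k' + 1 + d) * Pq q k' ^ 2 * Pq q d ^ 2 * (1 - q ^ (k' + 1)) *
    (1 - q ^ (d + 1))) * key

lemma tn_pred (m : ℕ) : tn (m - 1) + m = tn m := by
  cases m with
  | zero => rfl
  | succ n => rw [Nat.add_sub_cancel]; rfl

theorem qbt {q : ℂ} (hq : ‖q‖ < 1) (z : ℂ) (M : ℕ) :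
    ∏ j ∈ Finset.range M, (1 + z * q ^ j) =
      ∑ k ∈ Finset.range (M + 1), Bq q M k * q ^ tn (k - 1) * z ^ k := by
  induction M with
  | zero => simp [Bq_self_left hq, tn]
  | succ M ih =>
    rw [Finset.prod_range_succ, ih, mul_add, mul_one, Finset.sum_mul]
    rw [Finset.sum_range_succ' (fun k => Bq q (M+1) k * q ^ tn (k-1) * z ^ k) (M+1)]
    rw [Finset.sum_range_succ' (fun k => Bq q M k * q ^ tn (k-1) * z ^ k) M]
    simp only [Nat.add_sub_cancel]
    rw [Finset.sum_range_succ (fun k => Bq q M k * q ^ tn (k-1) * z ^ k * (z * q ^ M)) M]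
    rw [Finset.sum_range_succ (fun k => Bq q (M+1) (k+1) * q ^ tn k * z ^ (k+1)) M]
    have h2 : Bq q M 0 * q ^ tn (0-1) * z ^ 0 = Bq q (M+1) 0 * q ^ tn (0-1) * z ^ 0 := by
      rw [Bq_self_left hq, Bq_self_left hq]
    have h3 : Bq q M M * q ^ tn (M-1) * z ^ M * (z * q ^ M)
        = Bq q (M+1) (M+1) * q ^ tn M * z ^ (M+1) := by
      rw [Bq_self_right hq, Bq_self_right hq, one_mul, one_mul, ← tn_pred M, pow_add]
      ring
    have h1 : (∑ k ∈ Finset.range M, Bq q M (k+1) * q ^ tn k * z ^ (k+1))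
        + ∑ k ∈ Finset.range M, Bq q M k * q ^ tn (k-1) * z ^ k * (z * q ^ M)
        = ∑ k ∈ Finset.range M, Bq q (M+1) (k+1) * q ^ tn k * z ^ (k+1) := by
      rw [← Finset.sum_add_distrib]
      apply Finset.sum_congr rfl
      intro k hk
      have hkM : k < M := Finset.mem_range.1 hk
      rw [Bq_pascal hq M (k+1) (by omega) (by omega)]
      simp only [Nat.add_sub_cancel]
      have he : M + 1 - (k+1) = M - k := by omega
      rw [he]
      have hexp : tn (k - 1) + M = tn k + (M - k) := by
        have := tn_pred k
        omega
      have hq2 : q ^ tn (k - 1) * q ^ M = q ^ tn k * q ^ (M - k) := by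
        rw [← pow_add, ← pow_add, hexp]
      calc Bq q M (k+1) * q ^ tn k * z^(k+1) + Bq q M k * q ^ tn (k-1) * z^k * (z * q^M)
          = Bq q M (k+1) * q ^ tn k * z^(k+1)
            + Bq q M k * (q ^ tn (k-1) * q^M) * z^(k+1) := by ring
        _ = Bq q M (k+1) * q ^ tn k * z^(k+1)
            + Bq q M k * (q ^ tn k * q^(M-k)) * z^(k+1) := by rw [hq2]
        _ = (Bq q M (k+1) + q^(M-k) * Bq q M k) * q ^ tn k * z^(k+1) := by ring
    have hnorm : ∀ k, Bq q M k * q ^ tn (k-1) * z ^ k * (z * q ^ M)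
        = Bq q M k * q ^ (tn (k-1)) * z^k * (z * q ^ M) := fun k => rfl
    simp only [Nat.add_sub_cancel] at *
    linear_combination h1 + h2 + h3

/-- exponent in the symmetric identity -/
def Eex (N k : ℕ) : ℕ := if N ≤ k then tn (k - N) else tn (N - k - 1)

lemma exp_id (N k : ℕ) (hk : k ≤ 2 * N) :
    tn (N - 1) + tn (k - 1) = Eex N k + (N - 1) * k := by
  unfold Eex
  rcases le_or_gt N k with hNk | hNk
  · rw [if_pos hNk]
    rcases Nat.eq_zero_or_pos N with rfl | hN
    · interval_cases k <;> simp [tn]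
    obtain ⟨n, rfl⟩ : ∃ n, N = n + 1 := ⟨N - 1, by omega⟩
    obtain ⟨m, rfl⟩ : ∃ m, k = n + 1 + m := ⟨k - (n+1), by omega⟩
    simp only [Nat.add_sub_cancel, Nat.add_sub_cancel_left]
    rw [show n + 1 + m - 1 = n + m from by omega]
    have hG2 : 2 * ((tn n : ℤ) + tn (n + m)) = 2 * ((tn m : ℤ) + n * (n + 1 + m)) := by
      have t1 := tn_two_int n
      have t2 := tn_two_int (n + m)
      have t3 := tn_two_int m
      push_cast at t1 t2 t3 ⊢
      linear_combination t1 + t2 - t3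
    have hG : (tn n : ℤ) + tn (n + m) = (tn m : ℤ) + n * (n + 1 + m) := by linarith
    exact_mod_cast hG
  · rw [if_neg (by omega)]
    rcases Nat.eq_zero_or_pos k with rfl | hkpos
    · have e1 : (0:ℕ) - 1 = 0 := rfl
      rw [e1, Nat.mul_zero, Nat.sub_zero]
      show tn (N - 1) + tn 0 = tn (N - 1) + 0
      rfl
    obtain ⟨c, rfl⟩ : ∃ c, k = c + 1 := ⟨k - 1, by omega⟩
    obtain ⟨j, rfl⟩ : ∃ j, N = c + j + 2 := ⟨N - c - 2, by omega⟩
    have e1 : c + j + 2 - 1 = c + j + 1 := by omega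
    have e2 : c + 1 - 1 = c := by omega
    have e3 : c + j + 2 - (c + 1) - 1 = j := by omega
    rw [e1, e2, e3]
    have hG2 : 2 * ((tn (c+j+1) : ℤ) + tn c) = 2 * ((tn j : ℤ) + (c + j + 1) * (c + 1)) := by
      have t1 := tn_two_int (c+j+1)
      have t2 := tn_two_int c
      have t3 := tn_two_int j
      push_cast at t1 t2 t3 ⊢
      linear_combination t1 + t2 - t3
    have hG : (tn (c+j+1) : ℤ) + tn c = (tn j : ℤ) + (c + j + 1) * (c + 1) := by linarith
    exact_mod_cast hG

lemma sum_range_id_tn (N : ℕ) : ∑ j ∈ Finset.range N, j = tn (N - 1) := by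
  induction N with
  | zero => rfl
  | succ N ih => rw [Finset.sum_range_succ, ih, Nat.add_sub_cancel, tn_pred]

lemma claimA {q : ℂ} (hq0 : q ≠ 0) (N : ℕ) :
    q ^ tn (N - 1) * ∏ j ∈ Finset.range (2 * N), (1 + (q ^ (N - 1))⁻¹ * q ^ j)
      = (∏ t ∈ Finset.range N, (1 + q ^ (t + 1))) * (∏ s ∈ Finset.range N, (1 + q ^ s)) := by
  rcases Nat.eq_zero_or_pos N with rfl | hN
  · simp [tn]
  rw [two_mul, Finset.prod_range_add]
  have h2 : ∀ i ∈ Finset.range N, (1 + (q ^ (N - 1))⁻¹ * q ^ (N + i)) = 1 + q ^ (i + 1) := by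
    intro i _
    congr 1
    rw [inv_mul_eq_iff_eq_mul₀ (pow_ne_zero _ hq0), ← pow_add]
    congr 1
    omega
  rw [Finset.prod_congr rfl h2, ← mul_assoc]
  have h1 : q ^ tn (N - 1) * ∏ j ∈ Finset.range N, (1 + (q ^ (N - 1))⁻¹ * q ^ j)
      = ∏ s ∈ Finset.range N, (1 + q ^ s) := by
    have hsum : q ^ tn (N - 1) = ∏ j ∈ Finset.range N, q ^ (N - 1 - j) := by
      rw [Finset.prod_pow_eq_pow_sum]
      congr 1
      rw [← sum_range_id_tn N]
      exact (Finset.sum_range_reflect (fun j => j) N).symm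
    rw [hsum, ← Finset.prod_mul_distrib]
    rw [show (fun j => q ^ (N-1-j) * (1 + (q ^ (N-1))⁻¹ * q ^ j)) = fun j => q ^ (N-1-j) * (1 + (q ^ (N-1))⁻¹ * q ^ j) from rfl]
    have hfac : ∀ j ∈ Finset.range N, q ^ (N-1-j) * (1 + (q ^ (N-1))⁻¹ * q ^ j)
        = 1 + q ^ (N-1-j) := by
      intro j hj
      have hjN : j < N := Finset.mem_range.1 hj
      have : q ^ (N-1-j) * ((q ^ (N-1))⁻¹ * q ^ j) = 1 := by
        rw [mul_comm ((q ^ (N-1))⁻¹) (q ^ j), ← mul_assoc, ← pow_add]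
        have : N - 1 - j + j = N - 1 := by omega
        rw [this, mul_inv_cancel₀ (pow_ne_zero _ hq0)]
      rw [mul_add, mul_one, this, add_comm]
    rw [Finset.prod_congr rfl hfac]
    exact Finset.prod_range_reflect (fun s => 1 + q ^ s) N
  rw [h1, mul_comm]

lemma claimB {q : ℂ} (hq : ‖q‖ < 1) (hq0 : q ≠ 0) (N k : ℕ) (hk : k ≤ 2 * N) :
    q ^ tn (N - 1) * (Bq q (2*N) k * q ^ tn (k - 1) * ((q ^ (N - 1))⁻¹) ^ k)
      = Bq q (2*N) k * q ^ Eex N k := by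
  have h := exp_id N k hk
  have hpow : q ^ (tn (N-1)) * q ^ (tn (k-1)) = q ^ Eex N k * q ^ ((N-1)*k) := by
    rw [← pow_add, ← pow_add, h]
  have hz : ((q ^ (N-1))⁻¹) ^ k = (q ^ ((N-1)*k))⁻¹ := by rw [inv_pow, ← pow_mul]
  rw [hz]
  field_simp
  linear_combination Bq q (2*N) k * hpow

lemma Gidentity {q : ℂ} (hq : ‖q‖ < 1) (hq0 : q ≠ 0) (N : ℕ) :
    (∏ t ∈ Finset.range N, (1 + q ^ (t + 1))) * (∏ s ∈ Finset.range N, (1 + q ^ s))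
      = ∑ k ∈ Finset.range (2 * N + 1), Bq q (2*N) k * q ^ Eex N k := by
  have h := qbt hq ((q ^ (N - 1))⁻¹) (2 * N)
  rw [← claimA hq0 N, h, Finset.mul_sum]
  apply Finset.sum_congr rfl
  intro k hk
  have hk' : k ≤ 2 * N := by have := Finset.mem_range.1 hk; omega
  exact claimB hq hq0 N k hk'

lemma geom_partial_le {r : ℝ} (h0 : 0 ≤ r) (h1 : r < 1) (M : ℕ) :
    ∑ j ∈ Finset.range M, r ^ j ≤ (1 - r)⁻¹ := by
  have hs : Summable (fun j : ℕ => r ^ j) := summable_geometric_of_lt_one h0 h1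
  calc ∑ j ∈ Finset.range M, r ^ j ≤ ∑' j : ℕ, r ^ j :=
        Summable.sum_le_tsum _ (fun j _ => pow_nonneg h0 j) hs
    _ = (1 - r)⁻¹ := tsum_geometric_of_lt_one h0 h1

lemma Pq_norm_upper {q : ℂ} (hq : ‖q‖ < 1) (M : ℕ) :
    ‖Pq q M‖ ≤ Real.exp (‖q‖ * (1 - ‖q‖)⁻¹) := by
  set r := ‖q‖ with hr
  have hr0 : 0 ≤ r := norm_nonneg q
  calc ‖Pq q M‖ = ∏ j ∈ Finset.range M, ‖1 - q ^ (j+1)‖ := norm_prod _ _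
    _ ≤ ∏ j ∈ Finset.range M, (1 + r ^ (j+1)) := by
        apply Finset.prod_le_prod (fun j _ => norm_nonneg _)
        intro j _
        calc ‖1 - q^(j+1)‖ ≤ ‖(1:ℂ)‖ + ‖q^(j+1)‖ := norm_sub_le _ _
          _ = 1 + r ^ (j+1) := by rw [norm_one, norm_pow]
    _ ≤ ∏ j ∈ Finset.range M, Real.exp (r ^ (j+1)) := by
        apply Finset.prod_le_prod (fun j _ => by positivity)
        intro j _
        linarith [Real.add_one_le_exp (r ^ (j+1))]
    _ = Real.exp (∑ j ∈ Finset.range M, r ^ (j+1)) := by rw [Real.exp_sum]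
    _ ≤ Real.exp (r * (1-r)⁻¹) := by
        apply Real.exp_le_exp.2
        have : ∑ j ∈ Finset.range M, r ^ (j+1) = r * ∑ j ∈ Finset.range M, r ^ j := by
          rw [Finset.mul_sum]
          exact Finset.sum_congr rfl fun j _ => by rw [pow_succ, mul_comm]
        rw [this]
        exact mul_le_mul_of_nonneg_left (geom_partial_le hr0 hq M) hr0

lemma prod_one_sub_ge (M : ℕ) (a : ℕ → ℝ) (h0 : ∀ j, 0 ≤ a j) (h1 : ∀ j, a j ≤ 1) :
    ∀ s : Finset ℕ, 1 - ∑ j ∈ s, a j ≤ ∏ j ∈ s, (1 - a j) := by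
  intro s
  induction s using Finset.cons_induction with
  | empty => simp
  | cons i s hi ih =>
    rw [Finset.sum_cons, Finset.prod_cons]
    have hprod : ∏ j ∈ s, (1 - a j) ≤ 1 := by
      apply Finset.prod_le_one (fun j _ => by linarith [h0 j, h1 j]) (fun j _ => by linarith [h0 j])
    nlinarith [h0 i, h1 i, ih]

lemma Pq_norm_lower {q : ℂ} (hq : ‖q‖ < 1) :
    ∃ c : ℝ, 0 < c ∧ ∀ M, c ≤ ‖Pq q M‖ := by
  set r := ‖q‖ with hr
  have hr0 : 0 ≤ r := norm_nonneg q
  have hpow : ∀ j : ℕ, r ^ (j+1) < 1 := fun j => pow_lt_one₀ hr0 hq (Nat.succ_ne_zero j)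
  have hd : ∀ M, (0:ℝ) < ∏ j ∈ Finset.range M, (1 - r ^ (j+1)) := by
    intro M
    apply Finset.prod_pos
    intro j _
    linarith [hpow j]
  have hdle : ∀ M, ∏ j ∈ Finset.range M, (1 - r ^ (j+1)) ≤ ‖Pq q M‖ := by
    intro M
    rw [show ‖Pq q M‖ = ∏ j ∈ Finset.range M, ‖1 - q ^ (j+1)‖ from norm_prod _ _]
    apply Finset.prod_le_prod
    · intro j _; linarith [hpow j]
    · intro j _
      calc 1 - r ^ (j+1) = ‖(1:ℂ)‖ - ‖q ^ (j+1)‖ := by rw [norm_one, norm_pow]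
        _ ≤ ‖1 - q ^ (j+1)‖ := norm_sub_norm_le _ _
  -- choose J with tail sum ≤ 1/2
  obtain ⟨J, hJ⟩ : ∃ J : ℕ, r ^ (J+1) * (1-r)⁻¹ ≤ 1/2 := by
    have htend : Filter.Tendsto (fun n : ℕ => r ^ n * (1-r)⁻¹) Filter.atTop (nhds (0 * (1-r)⁻¹)) :=
      (tendsto_pow_atTop_nhds_zero_of_lt_one hr0 hq).mul_const _
    rw [zero_mul] at htend
    have := htend.eventually_le_const (show (0:ℝ) < 1/2 by norm_num)
    obtain ⟨J0, hJ0⟩ := this.exists_forall_of_atTop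
    exact ⟨J0, hJ0 (J0+1) (by omega)⟩
  set dJ := ∏ j ∈ Finset.range J, (1 - r ^ (j+1)) with hdJ
  refine ⟨dJ * (1/2), mul_pos (hd J) (by norm_num), fun M => ?_⟩
  rcases le_or_gt M J with hMJ | hMJ
  · -- d M ≥ d J since extra factors ≤ 1
    have h1 : dJ ≤ ∏ j ∈ Finset.range M, (1 - r ^ (j+1)) := by
      rw [hdJ, ← Finset.prod_range_mul_prod_Ico _ hMJ]
      have hle1 : ∏ j ∈ Finset.Ico M J, (1 - r ^ (j+1)) ≤ 1 :=
        Finset.prod_le_one (fun j _ => by linarith [hpow j]) (fun j _ => by linarith [pow_nonneg hr0 (j+1)])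
      nlinarith [hd M, Finset.prod_pos (fun j (_ : j ∈ Finset.Ico M J) => by linarith [hpow j] : ∀ j ∈ Finset.Ico M J, (0:ℝ) < 1 - r ^ (j+1))]
    have := hdle M
    nlinarith [hd M, hd J]
  · have hsplit : ∏ j ∈ Finset.range M, (1 - r ^ (j+1))
        = dJ * ∏ j ∈ Finset.Ico J M, (1 - r ^ (j+1)) := by
      rw [hdJ, Finset.prod_range_mul_prod_Ico _ hMJ.le]
    have htail : 1/2 ≤ ∏ j ∈ Finset.Ico J M, (1 - r ^ (j+1)) := by
      have hsum : ∑ j ∈ Finset.Ico J M, r ^ (j+1) ≤ 1/2 := by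
        calc ∑ j ∈ Finset.Ico J M, r ^ (j+1)
            = ∑ i ∈ Finset.range (M - J), r ^ (J + i + 1) := by
              rw [Finset.sum_Ico_eq_sum_range]
          _ = r ^ (J+1) * ∑ i ∈ Finset.range (M - J), r ^ i := by
              rw [Finset.mul_sum]
              exact Finset.sum_congr rfl fun i _ => by rw [← pow_add]; congr 1; omega
          _ ≤ r ^ (J+1) * (1-r)⁻¹ :=
              mul_le_mul_of_nonneg_left (geom_partial_le hr0 hq _) (pow_nonneg hr0 _)
          _ ≤ 1/2 := hJ
      have := prod_one_sub_ge M (fun j => r ^ (j+1)) (fun j => pow_nonneg hr0 _)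
        (fun j => (hpow j).le) (Finset.Ico J M)
      linarith
    have := hdle M
    rw [hsplit] at this
    have hdJ0 : 0 < dJ := hd J
    nlinarith

section Analysis
variable {q : ℂ}

lemma summable_norm_pow (hq : ‖q‖ < 1) (f : ℕ → ℕ) (hf : ∀ n, n ≤ f n) :
    Summable fun n => ‖q‖ ^ (f n) := by
  have hr0 : 0 ≤ ‖q‖ := norm_nonneg q
  apply Summable.of_nonneg_of_le (fun n => pow_nonneg hr0 _)
    (fun n => pow_le_pow_of_le_one hr0 hq.le (hf n))
  exact summable_geometric_of_lt_one hr0 hq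

lemma mult_aux (hq : ‖q‖ < 1) (f : ℕ → ℕ) (hf : ∀ n, n ≤ f n) (s : ℕ → ℂ)
    (hs : ∀ n, s n = 1 - q ^ (f n)) : Multipliable s ∧
      HasProd s (∏' n, s n) := by
  have : s = fun n => 1 + (-(q ^ (f n))) := funext fun n => by rw [hs n]; ring
  rw [this]
  have hsum : Summable fun n => ‖(-(q ^ (f n)) : ℂ)‖ := by
    simpa [norm_pow] using summable_norm_pow hq f hf
  exact ⟨multipliable_one_add _ hsum, (multipliable_one_add _ hsum).hasProd⟩

lemma tendsto_2N : Filter.Tendsto (fun N : ℕ => 2 * N) Filter.atTop Filter.atTop :=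
  Filter.tendsto_atTop_atTop.2 fun b => ⟨b, fun a ha => by omega⟩

lemma tendsto_addk (k : ℕ) : Filter.Tendsto (fun N : ℕ => N + k) Filter.atTop Filter.atTop :=
  Filter.tendsto_atTop_atTop.2 fun b => ⟨b, fun a ha => by omega⟩

-- the function whose product is Pi
lemma hPi_mult (hq : ‖q‖ < 1) : Multipliable (fun n : ℕ => 1 - q ^ (n + 1)) :=
  (mult_aux hq (fun n => n + 1) (fun n => Nat.le_succ n) _ (fun n => rfl)).1

lemma htendPq (hq : ‖q‖ < 1) : Filter.Tendsto (fun M => Pq q M) Filter.atTop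
    (nhds (∏' n : ℕ, (1 - q ^ (n + 1)))) := (hPi_mult hq).hasProd.tendsto_prod_nat

lemma hPi_ne (hq : ‖q‖ < 1) : (∏' n : ℕ, (1 - q ^ (n + 1))) ≠ 0 := by
  have h : (fun n : ℕ => 1 - q ^ (n + 1)) = fun n => 1 + (-(q ^ (n + 1))) :=
    funext fun n => by ring
  rw [h]
  apply tprod_one_add_ne_zero
  · simpa [norm_pow] using summable_norm_pow hq (fun n => n + 1) (fun n => Nat.le_succ n)
  · intro n
    have := one_sub_pow_ne_zero hq (n + 1) (by omega)
    intro hcon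
    apply this
    rw [← hcon]; ring

lemma hPa_mult (hq : ‖q‖ < 1) : Multipliable (fun n : ℕ => 1 + q ^ (n + 1)) := by
  apply multipliable_one_add
  simpa [norm_pow] using summable_norm_pow hq (fun n => n + 1) (fun n => Nat.le_succ n)

lemma htendPa (hq : ‖q‖ < 1) : Filter.Tendsto (fun N => ∏ t ∈ Finset.range N, (1 + q ^ (t + 1)))
    Filter.atTop (nhds (∏' n : ℕ, (1 + q ^ (n + 1)))) := (hPa_mult hq).hasProd.tendsto_prod_nat

lemma hPa_ne (hq : ‖q‖ < 1) : (∏' n : ℕ, (1 + q ^ (n + 1))) ≠ 0 := by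
  apply tprod_one_add_ne_zero
  · simpa [norm_pow] using summable_norm_pow hq (fun n => n + 1) (fun n => Nat.le_succ n)
  · intro n
    intro hcon
    have h1 : q ^ (n+1) = -1 := by linear_combination hcon
    have : ‖q ^ (n+1)‖ < 1 := by
      rw [norm_pow]; exact pow_lt_one₀ (norm_nonneg q) hq (by omega)
    rw [h1] at this
    simp at this

lemma tn_ge (m : ℕ) : m ≤ tn m := by
  induction m with
  | zero => omega
  | succ m ih => rw [tn]; omega

/-- The coefficient function for Tannery's theorem. -/
noncomputable def FF (q : ℂ) (N m : ℕ) : ℂ :=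
  ((if m ≤ N then Bq q (2*N) (N+m) else 0) + (if m < N then Bq q (2*N) (N+1+m) else 0))
    * q ^ tn m

lemma FF_zero (N m : ℕ) (h : N + 1 ≤ m) : FF q N m = 0 := by
  unfold FF
  rw [if_neg (by omega), if_neg (by omega)]
  ring

lemma sum_eq_tsum_FF (N : ℕ) :
    ∑ k ∈ Finset.range (2*N+1), Bq q (2*N) k * q ^ Eex N k = ∑' m : ℕ, FF q N m := by
  have hzero : ∀ m ∉ Finset.range (N+1), FF q N m = 0 := by
    intro m hm
    apply FF_zero N m
    have : ¬ (m < N+1) := fun h => hm (Finset.mem_range.2 h)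
    omega
  rw [tsum_eq_sum (s := Finset.range (N+1)) hzero]
  -- split LHS
  rw [show 2*N+1 = N + (N+1) from by omega, Finset.sum_range_add]
  have hsecond : ∀ i ∈ Finset.range (N+1),
      Bq q (2*N) (N+i) * q ^ Eex N (N+i) = Bq q (2*N) (N+i) * q ^ tn i := by
    intro i _
    congr 2
    unfold Eex
    rw [if_pos (by omega), Nat.add_sub_cancel_left]
  have hfirst : ∑ k ∈ Finset.range N, Bq q (2*N) k * q ^ Eex N k
      = ∑ m ∈ Finset.range N, Bq q (2*N) (N+1+m) * q ^ tn m := by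
    rw [← Finset.sum_range_reflect]
    apply Finset.sum_congr rfl
    intro m hm
    have hmN : m < N := Finset.mem_range.1 hm
    have h1 : Eex N (N - 1 - m) = tn m := by
      unfold Eex
      rw [if_neg (by omega)]
      congr 1
      omega
    have h2 : Bq q (2*N) (N - 1 - m) = Bq q (2*N) (N+1+m) := by
      rw [Bq_symm (2*N) (N-1-m) (by omega)]
      congr 1
      omega
    rw [h1, h2]
  rw [hfirst, Finset.sum_congr rfl hsecond]
  -- now expand FF on the RHS
  have hFF : ∀ m ∈ Finset.range (N+1),
      FF q N m = Bq q (2*N) (N+m) * q ^ tn m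
        + (if m < N then Bq q (2*N) (N+1+m) else 0) * q ^ tn m := by
    intro m hm
    have hm' : m < N + 1 := Finset.mem_range.1 hm
    unfold FF
    rw [if_pos (by omega : m ≤ N)]
    ring
  rw [Finset.sum_congr rfl hFF, Finset.sum_add_distrib]
  have hlast : ∑ m ∈ Finset.range (N+1), (if m < N then Bq q (2*N) (N+1+m) else 0) * q ^ tn m
      = ∑ m ∈ Finset.range N, Bq q (2*N) (N+1+m) * q ^ tn m := by
    rw [Finset.sum_range_succ, if_neg (by omega), zero_mul, add_zero]
    apply Finset.sum_congr rfl
    intro m hm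
    rw [if_pos (Finset.mem_range.1 hm)]
  rw [hlast]
  ring

lemma FF_tendsto (hq : ‖q‖ < 1) (m : ℕ) :
    Filter.Tendsto (fun N => FF q N m) Filter.atTop
      (nhds (2 * (∏' n : ℕ, (1 - q ^ (n + 1)))⁻¹ * q ^ tn m)) := by
  set Pi := ∏' n : ℕ, (1 - q ^ (n + 1)) with hPidef
  have hne := hPi_ne hq
  have hPP : Pi * Pi ≠ 0 := mul_ne_zero hne hne
  have t2N : Filter.Tendsto (fun N => Pq q (2*N)) Filter.atTop (nhds Pi) :=
    (htendPq hq).comp tendsto_2N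
  have tNm : Filter.Tendsto (fun N => Pq q (N+m)) Filter.atTop (nhds Pi) :=
    (htendPq hq).comp (tendsto_addk m)
  have tNm1 : Filter.Tendsto (fun N => Pq q (N+(1+m))) Filter.atTop (nhds Pi) :=
    (htendPq hq).comp (tendsto_addk (1+m))
  have tNsub : Filter.Tendsto (fun N : ℕ => Pq q (N-m)) Filter.atTop (nhds Pi) :=
    (htendPq hq).comp (Filter.tendsto_sub_atTop_nat m)
  have tNsub1 : Filter.Tendsto (fun N : ℕ => Pq q (N-(m+1))) Filter.atTop (nhds Pi) :=
    (htendPq hq).comp (Filter.tendsto_sub_atTop_nat (m+1))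
  have hB1 : Filter.Tendsto (fun N => Pq q (2*N) / (Pq q (N+m) * Pq q (N-m)))
      Filter.atTop (nhds (Pi / (Pi * Pi))) := t2N.div (tNm.mul tNsub) hPP
  have hB2 : Filter.Tendsto (fun N => Pq q (2*N) / (Pq q (N+(1+m)) * Pq q (N-(m+1))))
      Filter.atTop (nhds (Pi / (Pi * Pi))) := t2N.div (tNm1.mul tNsub1) hPP
  have hcomb := ((hB1.add hB2).mul_const (q ^ tn m))
  have heq : (Pi / (Pi * Pi) + Pi / (Pi * Pi)) * q ^ tn m = 2 * Pi⁻¹ * q ^ tn m := by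
    rw [div_mul_cancel_left₀ hne]
    ring
  rw [heq] at hcomb
  apply hcomb.congr'
  filter_upwards [Filter.eventually_ge_atTop (m+1)] with N hN
  unfold FF
  rw [if_pos (by omega : m ≤ N), if_pos (by omega : m < N)]
  unfold Bq
  rw [show 2*N - (N+m) = N - m from by omega, show 2*N - (N+1+m) = N - (m+1) from by omega,
    show N+1+m = N+(1+m) from by omega]

lemma FF_bound (hq : ‖q‖ < 1) : ∃ K : ℝ, ∀ N m, ‖FF q N m‖ ≤ K * ‖q‖ ^ tn m ∧ 0 ≤ K := by
  obtain ⟨c, hc0, hc⟩ := Pq_norm_lower hq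
  set CE := Real.exp (‖q‖ * (1 - ‖q‖)⁻¹) with hCE
  have hCE0 : 0 < CE := Real.exp_pos _
  refine ⟨2 * (CE / (c*c)), fun N m => ⟨?_, by positivity⟩⟩
  have hBb : ∀ M k : ℕ, ‖Bq q M k‖ ≤ CE / (c*c) := by
    intro M k
    unfold Bq
    rw [norm_div, norm_mul]
    apply div_le_div₀ hCE0.le (Pq_norm_upper hq M)
    · positivity
    · exact mul_le_mul (hc k) (hc (M-k)) hc0.le (norm_nonneg _)
  unfold FF
  rw [norm_mul, norm_pow]
  apply mul_le_mul_of_nonneg_right _ (pow_nonneg (norm_nonneg q) _)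
  calc ‖(if m ≤ N then Bq q (2*N) (N+m) else 0) + (if m < N then Bq q (2*N) (N+1+m) else 0)‖
      ≤ ‖(if m ≤ N then Bq q (2*N) (N+m) else 0)‖
        + ‖(if m < N then Bq q (2*N) (N+1+m) else 0)‖ := norm_add_le _ _
    _ ≤ CE / (c*c) + CE / (c*c) := by
        apply add_le_add
        · split
          · exact hBb _ _
          · simp; positivity
        · split
          · exact hBb _ _
          · simp; positivity
    _ = 2 * (CE / (c*c)) := by ring

lemma core_identity (hq : ‖q‖ < 1) (hq0 : q ≠ 0) :
    (∑' m : ℕ, q ^ tn m)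
      = (∏' n : ℕ, (1 - q ^ (n + 1))) * (∏' n : ℕ, (1 + q ^ (n + 1)))^2 := by
  set Pi := ∏' n : ℕ, (1 - q ^ (n + 1)) with hPidef
  set Pa := ∏' n : ℕ, (1 + q ^ (n + 1)) with hPadef
  obtain ⟨K, hK⟩ := FF_bound hq
  have hKK : 0 ≤ K := (hK 0 0).2
  have hbound_sum : Summable (fun m => K * ‖q‖ ^ tn m) := by
    apply Summable.mul_left
    exact summable_norm_pow hq tn tn_ge
  have htann : Filter.Tendsto (fun N => ∑' m, FF q N m) Filter.atTop
      (nhds (∑' m : ℕ, 2 * Pi⁻¹ * q ^ tn m)) := by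
    apply tendsto_tsum_of_dominated_convergence hbound_sum (fun m => FF_tendsto hq m)
    filter_upwards with N
    intro m
    exact (hK N m).1
  have htsum : (∑' m : ℕ, 2 * Pi⁻¹ * q ^ tn m) = 2 * Pi⁻¹ * ∑' m : ℕ, q ^ tn m :=
    tsum_mul_left
  -- LHS via Gidentity
  have hG : ∀ N, (∏ t ∈ Finset.range N, (1 + q ^ (t+1))) * (∏ s ∈ Finset.range N, (1 + q ^ s))
      = ∑' m, FF q N m := fun N => (Gidentity hq hq0 N).trans (sum_eq_tsum_FF N)
  have hL : Filter.Tendsto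
      (fun N => (∏ t ∈ Finset.range N, (1 + q ^ (t+1))) * (∏ s ∈ Finset.range N, (1 + q ^ s)))
      Filter.atTop (nhds (Pa * (Pa * 2))) := by
    apply Filter.Tendsto.mul (htendPa hq)
    have hshift : Filter.Tendsto
        (fun N => ∏ s ∈ Finset.range (N+1), (1 + q ^ s)) Filter.atTop (nhds (Pa * 2)) := by
      have : (fun N => ∏ s ∈ Finset.range (N+1), (1 + q ^ s))
          = fun N => (∏ t ∈ Finset.range N, (1 + q ^ (t+1))) * (1 + q ^ 0) := by
        funext N
        exact Finset.prod_range_succ' _ N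
      rw [this]
      have : (1 : ℂ) + q ^ 0 = 2 := by norm_num
      rw [this]
      exact (htendPa hq).mul_const 2
    exact (Filter.tendsto_add_atTop_iff_nat 1).1 hshift
  have hL' : Filter.Tendsto (fun N => ∑' m, FF q N m) Filter.atTop (nhds (Pa * (Pa * 2))) := by
    apply hL.congr
    intro N
    exact hG N
  have huniq : Pa * (Pa * 2) = 2 * Pi⁻¹ * ∑' m : ℕ, q ^ tn m := by
    rw [← htsum]
    exact tendsto_nhds_unique hL' htann
  have hne := hPi_ne hq
  field_simp at huniq
  rw [show Pi * Pa ^ 2 = Pa * Pa * Pi from by ring]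
  have hne' : Pi ≠ 0 := hne
  rw [← sq, huniq, div_mul_cancel₀ _ hne']
end Analysis

lemma split_fin (q : ℂ) (N : ℕ) :
    ∏ n ∈ Finset.range (2*N), (1 - q^(n+1))
      = (∏ n ∈ Finset.range N, (1 - q^(2*(n+1)))) * ∏ n ∈ Finset.range N, (1 - q^(2*n+1)) := by
  induction N with
  | zero => simp
  | succ N ih =>
    rw [show 2*(N+1) = (2*N)+1+1 from by ring, Finset.prod_range_succ, Finset.prod_range_succ,
      ih, Finset.prod_range_succ, Finset.prod_range_succ,
      show 2*N+1+1 = 2*(N+1) from by ring]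
    ring

theorem psi_product_formula (q : ℂ) (hq : ‖q‖ < 1) :
    ∑' n : ℕ, q ^ (n * (n + 1) / 2) =
      (∏' n : ℕ, (1 - q ^ (2 * (n + 1)))) / ∏' n : ℕ, (1 - q ^ (2 * n + 1)) := by
  by_cases hq0 : q = 0
  · subst hq0
    have hL : (∑' n : ℕ, (0:ℂ) ^ (n * (n + 1) / 2)) = 1 := by
      rw [tsum_eq_single 0]
      · norm_num
      · intro n hn
        have h1 : n ≤ n * (n+1)/2 := by rw [← tn_eq]; exact tn_ge n
        rw [zero_pow (by omega)]
    have h2 : ∀ n : ℕ, (1 - (0:ℂ) ^ (2*(n+1))) = 1 := fun n => by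
      rw [zero_pow (by omega)]; ring
    have h3 : ∀ n : ℕ, (1 - (0:ℂ) ^ (2*n+1)) = 1 := fun n => by
      rw [zero_pow (by omega)]; ring
    rw [hL, tprod_congr h2, tprod_congr h3, tprod_one]
    norm_num
  · have hcore := core_identity hq hq0
    have hL : (∑' n : ℕ, q ^ (n * (n + 1) / 2)) = ∑' n : ℕ, q ^ tn n :=
      tsum_congr fun n => by rw [tn_eq]
    set Pi := ∏' n : ℕ, (1 - q ^ (n + 1)) with hPidef
    set Pa := ∏' n : ℕ, (1 + q ^ (n + 1)) with hPadef
    set Pe := ∏' n : ℕ, (1 - q ^ (2 * (n + 1))) with hPedef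
    set Po := ∏' n : ℕ, (1 - q ^ (2 * n + 1)) with hPodef
    have hfun : (fun n : ℕ => (1 + q^(n+1)) * (1 - q^(n+1))) = fun n => 1 - q^(2*(n+1)) := by
      funext n
      have hp : (q^(n+1))^2 = q^(2*(n+1)) := by rw [← pow_mul]; congr 1; ring
      linear_combination -hp
    have hPe_eq : Pe = Pa * Pi := by
      have h := (hPa_mult hq).hasProd.mul (hPi_mult hq).hasProd
      rw [hfun] at h
      exact h.tprod_eq
    have hPemult : Multipliable (fun n : ℕ => 1 - q^(2*(n+1))) :=
      (mult_aux hq (fun n => 2*(n+1)) (fun n => by show n ≤ 2*(n+1); omega) _ (fun n => rfl)).1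
    have hPomult : Multipliable (fun n : ℕ => 1 - q^(2*n+1)) :=
      (mult_aux hq (fun n => 2*n+1) (fun n => by show n ≤ 2*n+1; omega) _ (fun n => rfl)).1
    have hsplit : Pi = Pe * Po := by
      have hT1 : Filter.Tendsto (fun N : ℕ => ∏ n ∈ Finset.range (2*N), (1 - q^(n+1)))
          Filter.atTop (nhds Pi) := (htendPq hq).comp tendsto_2N
      have hT2 : Filter.Tendsto
          (fun N : ℕ => (∏ n ∈ Finset.range N, (1 - q^(2*(n+1)))) * ∏ n ∈ Finset.range N, (1 - q^(2*n+1)))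
          Filter.atTop (nhds (Pe * Po)) :=
        (hPemult.hasProd.tendsto_prod_nat).mul (hPomult.hasProd.tendsto_prod_nat)
      exact tendsto_nhds_unique (hT1.congr (fun N => split_fin q N)) hT2
    have hPo_ne : Po ≠ 0 := by
      rw [hPodef, show (fun n : ℕ => 1 - q^(2*n+1)) = fun n => 1 + (-(q^(2*n+1))) from
        funext fun n => by ring]
      apply tprod_one_add_ne_zero
      · simpa [norm_pow] using summable_norm_pow hq (fun n => 2*n+1) (fun n => by show n ≤ 2*n+1; omega)
      · intro n hcon
        apply one_sub_pow_ne_zero hq (2*n+1) (by omega)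
        rw [← hcon]; ring
    have hPaPo : Pa * Po = 1 := by
      have h := hsplit
      rw [hPe_eq] at h
      apply mul_left_cancel₀ (hPi_ne hq)
      rw [mul_one]
      linear_combination -h
    rw [hL, hcore]
    rw [eq_div_iff hPo_ne]
    linear_combination Pi * Pa * hPaPo - hPe_eq
end
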